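/- arXiv:1805.00417 — 4 statements merged into one kernel-verified Lean document; each statement's English description precedes it below -/
import Mathlib

section
/- Let γ be any minimizer of ∫ c_w dγ over Γ₃(μ). Then for every point (x₁, x₂, x₃) in the support of γ there exist k ∈ {1,2} and a permutation σ of {1,2,3} such that x_{σ(1)} ∈ L^k, x_{σ(2)} ∈ C, and x_{σ(3)} ∈ R^k. -/
open MeasureTheory

noncomputable section

def Cset : Set ℝ := Set.Icc 0 (1 / 2)
def Rset (k : ℕ) : Set ℝ := Set.Icc ((3 : ℝ) ^ k) ((3 : ℝ) ^ k + 1 / 2)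
def Lset (k : ℕ) : Set ℝ := Set.Icc (-(3 : ℝ) ^ k - 1) (-(3 : ℝ) ^ k)

def muL : Measure ℝ := (1 / 2 : ENNReal) • volume.restrict (Lset 1 ∪ Lset 2)
def muC : Measure ℝ := (2 : ENNReal) • volume.restrict Cset
def muR : Measure ℝ := volume.restrict (Rset 1 ∪ Rset 2)
def mu : Measure ℝ := (1 / 3 : ENNReal) • (muL + muC + muR)

/-- The repulsive harmonic cost for three marginals on `ℝ`. -/
def cw (x : Fin 3 → ℝ) : ℝ :=
  -|x 0 - x 1| ^ 2 - |x 0 - x 2| ^ 2 - |x 1 - x 2| ^ 2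

/-- `Γ₃(μ)`: probability measures on `ℝ³` with all three marginals equal to `μ`. -/
def Gamma3 (μ : Measure ℝ) : Set (Measure (Fin 3 → ℝ)) :=
  {γ | IsProbabilityMeasure γ ∧ ∀ i : Fin 3, γ.map (fun x => x i) = μ}

/-- The (topological) support of a measure: points all of whose open neighbourhoods
have positive measure. -/
def msupp {α : Type*} [TopologicalSpace α] [MeasurableSpace α] (γ : Measure α) : Set α :=
  {x | ∀ U : Set α, IsOpen U → x ∈ U → 0 < γ U}

lemma map_affine (a b : ℝ) (ha : a ≠ 0) :
    Measure.map (fun u : ℝ => a * u + b) volume = ENNReal.ofReal |a⁻¹| • volume := by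
  have h1 : (fun u : ℝ => a * u + b) = (fun v : ℝ => v + b) ∘ (fun u => a * u) := rfl
  rw [h1, ← Measure.map_map (by fun_prop) (by fun_prop), Real.map_volume_mul_left ha,
    Measure.map_smul, Measure.IsAddRightInvariant.map_add_right_eq_self b]

lemma map_restrict_affine (a b : ℝ) (ha : a ≠ 0) {s : Set ℝ} (hs : MeasurableSet s) :
    Measure.map (fun u : ℝ => a * u + b) (volume.restrict ((fun u : ℝ => a * u + b) ⁻¹' s)) =
      ENNReal.ofReal |a⁻¹| • volume.restrict s := by
  rw [← Measure.restrict_map (by fun_prop) hs, map_affine a b ha, Measure.restrict_smul]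

def nu : Measure ℝ := (1/2 : ENNReal) • volume.restrict (Set.Icc (0:ℝ) 1)

def gmap (k : ℕ) : ℝ → (Fin 3 → ℝ) := fun u => ![-(3:ℝ)^k - u, u/2, (3:ℝ)^k + u/2]

lemma gmap_meas (k : ℕ) : Measurable (gmap k) := by
  unfold gmap
  refine measurable_pi_iff.mpr fun i => ?_
  fin_cases i <;> simp <;> fun_prop

lemma marg0 (k : ℕ) : (nu.map (gmap k)).map (fun x => x 0)
    = (1/2 : ENNReal) • volume.restrict (Lset k) := by
  rw [Measure.map_map (measurable_pi_apply 0) (gmap_meas k)]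
  have h : ((fun x : Fin 3 → ℝ => x 0) ∘ gmap k) = fun u : ℝ => (-1) * u + (-(3:ℝ)^k) := by
    funext u; simp [gmap]; ring
  have hpre : (fun u : ℝ => (-1) * u + (-(3:ℝ)^k)) ⁻¹' (Lset k) = Set.Icc (0:ℝ) 1 := by
    ext u; simp only [Lset, Set.mem_preimage, Set.mem_Icc]
    constructor <;> intro hh <;> exact ⟨by linarith [hh.1, hh.2], by linarith [hh.1, hh.2]⟩
  rw [h]
  unfold nu
  rw [Measure.map_smul, ← hpre, map_restrict_affine _ _ (by norm_num) (s := Lset k) (by unfold Lset; exact measurableSet_Icc)]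
  norm_num

lemma marg1 (k : ℕ) : (nu.map (gmap k)).map (fun x => x 1)
    = volume.restrict Cset := by
  rw [Measure.map_map (measurable_pi_apply 1) (gmap_meas k)]
  have h : ((fun x : Fin 3 → ℝ => x 1) ∘ gmap k) = fun u : ℝ => (1/2) * u + 0 := by
    funext u; simp [gmap]; ring
  have hpre : (fun u : ℝ => (1/2 : ℝ) * u + 0) ⁻¹' Cset = Set.Icc (0:ℝ) 1 := by
    ext u; simp only [Cset, Set.mem_preimage, Set.mem_Icc]
    constructor <;> intro hh <;> exact ⟨by linarith [hh.1, hh.2], by linarith [hh.1, hh.2]⟩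
  rw [h]
  unfold nu
  rw [Measure.map_smul, ← hpre, map_restrict_affine _ _ (by norm_num) (s := Cset) (by unfold Cset; exact measurableSet_Icc)]
  rw [smul_smul]
  norm_num
  rw [ENNReal.inv_mul_cancel (by norm_num) (by norm_num), one_smul]

lemma marg2 (k : ℕ) : (nu.map (gmap k)).map (fun x => x 2)
    = volume.restrict (Rset k) := by
  rw [Measure.map_map (measurable_pi_apply 2) (gmap_meas k)]
  have h : ((fun x : Fin 3 → ℝ => x 2) ∘ gmap k) = fun u : ℝ => (1/2) * u + (3:ℝ)^k := by
    funext u; simp [gmap]; ring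
  have hpre : (fun u : ℝ => (1/2 : ℝ) * u + (3:ℝ)^k) ⁻¹' (Rset k) = Set.Icc (0:ℝ) 1 := by
    ext u; simp only [Rset, Set.mem_preimage, Set.mem_Icc]
    constructor <;> intro hh <;> exact ⟨by linarith [hh.1, hh.2], by linarith [hh.1, hh.2]⟩
  rw [h]
  unfold nu
  rw [Measure.map_smul, ← hpre, map_restrict_affine _ _ (by norm_num) (s := Rset k) (by unfold Rset; exact measurableSet_Icc)]
  rw [smul_smul]
  norm_num
  rw [ENNReal.inv_mul_cancel (by norm_num) (by norm_num), one_smul]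

def gam0 : Measure (Fin 3 → ℝ) := nu.map (gmap 1) + nu.map (gmap 2)

def rot : (Fin 3 → ℝ) → (Fin 3 → ℝ) := fun x i => x (i + 1)

lemma rot_meas : Measurable rot :=
  measurable_pi_iff.mpr fun i => measurable_pi_apply (i + 1)

def gamStar : Measure (Fin 3 → ℝ) :=
  (1/3 : ENNReal) • (gam0 + gam0.map rot + gam0.map (rot ∘ rot))

lemma disjLs : Disjoint (Lset 1) (Lset 2) := by
  rw [Set.disjoint_left]
  intro a h1 h2
  have := h1.1; have := h2.2
  simp only [Lset, Set.mem_Icc] at h1 h2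
  norm_num at h1 h2
  linarith [h1.1, h2.2]

lemma disjRs : Disjoint (Rset 1) (Rset 2) := by
  rw [Set.disjoint_left]
  intro a h1 h2
  simp only [Rset, Set.mem_Icc] at h1 h2
  norm_num at h1 h2
  linarith [h1.2, h2.1]

lemma measLset (k : ℕ) : MeasurableSet (Lset k) := by unfold Lset; exact measurableSet_Icc
lemma measRset (k : ℕ) : MeasurableSet (Rset k) := by unfold Rset; exact measurableSet_Icc
lemma measCset : MeasurableSet Cset := by unfold Cset; exact measurableSet_Icc

lemma gm0 : gam0.map (fun x => x 0) = muL := by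
  unfold gam0 muL
  rw [Measure.map_add _ _ (measurable_pi_apply 0), marg0, marg0,
    Measure.restrict_union disjLs (measLset 2), smul_add]

lemma gm1 : gam0.map (fun x => x 1) = muC := by
  unfold gam0 muC
  rw [Measure.map_add _ _ (measurable_pi_apply 1), marg1, marg1]
  rw [two_smul]

lemma gm2 : gam0.map (fun x => x 2) = muR := by
  unfold gam0 muR
  rw [Measure.map_add _ _ (measurable_pi_apply 2), marg2, marg2,
    Measure.restrict_union disjRs (measRset 2)]

lemma gamStar_marg (i : Fin 3) : gamStar.map (fun x => x i) = mu := by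
  unfold gamStar
  rw [Measure.map_smul, Measure.map_add _ _ (measurable_pi_apply i),
    Measure.map_add _ _ (measurable_pi_apply i),
    Measure.map_map (measurable_pi_apply i) rot_meas,
    Measure.map_map (measurable_pi_apply i) (rot_meas.comp rot_meas)]
  have hc1 : ((fun x : Fin 3 → ℝ => x i) ∘ rot) = (fun x : Fin 3 → ℝ => x (i + 1)) := rfl
  have hc2 : ((fun x : Fin 3 → ℝ => x i) ∘ (rot ∘ rot)) = (fun x : Fin 3 → ℝ => x (i + 1 + 1)) := rfl
  rw [hc1, hc2]
  unfold mu
  fin_cases i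
  · show (1/3:ENNReal) • (gam0.map (fun x => x 0) + gam0.map (fun x => x 1) + gam0.map (fun x => x 2)) = (1/3:ENNReal) • (muL + muC + muR)
    rw [gm0, gm1, gm2]
  · show (1/3:ENNReal) • (gam0.map (fun x => x 1) + gam0.map (fun x => x 2) + gam0.map (fun x => x 0)) = (1/3:ENNReal) • (muL + muC + muR)
    rw [gm0, gm1, gm2]; congr 1; abel
  · show (1/3:ENNReal) • (gam0.map (fun x => x 2) + gam0.map (fun x => x 0) + gam0.map (fun x => x 1)) = (1/3:ENNReal) • (muL + muC + muR)
    rw [gm0, gm1, gm2]; congr 1; abel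
def Tbad : Set (Fin 3 → ℝ) := {y | y 0 + y 1 + y 2 ≠ 0}

lemma measTbad : MeasurableSet Tbad := by
  have : Measurable (fun y : Fin 3 → ℝ => y 0 + y 1 + y 2) :=
    ((measurable_pi_apply 0).add (measurable_pi_apply 1)).add (measurable_pi_apply 2)
  exact (this (measurableSet_singleton 0)).compl

lemma rot_pre : rot ⁻¹' Tbad = Tbad := by
  ext y
  show y 1 + y 2 + y 0 ≠ 0 ↔ y 0 + y 1 + y 2 ≠ 0
  constructor <;> intro h hc <;> exact h (by linarith)

lemma rotrot_pre : (rot ∘ rot) ⁻¹' Tbad = Tbad := by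
  ext y
  show y 2 + y 0 + y 1 ≠ 0 ↔ y 0 + y 1 + y 2 ≠ 0
  constructor <;> intro h hc <;> exact h (by linarith)

lemma gmap_pre (k : ℕ) : gmap k ⁻¹' Tbad = ∅ := by
  ext u
  simp only [Set.mem_preimage, Set.mem_empty_iff_false, iff_false, Tbad, Set.mem_setOf_eq,
    not_not, gmap, Matrix.cons_val_zero, Matrix.cons_val_one, Matrix.head_cons,
    Matrix.cons_val_two, Matrix.tail_cons]
  ring

lemma gam0_Tbad : gam0 Tbad = 0 := by
  unfold gam0
  rw [Measure.add_apply, Measure.map_apply (gmap_meas 1) measTbad,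
    Measure.map_apply (gmap_meas 2) measTbad, gmap_pre, gmap_pre]
  simp

lemma gamStar_Tbad : gamStar Tbad = 0 := by
  unfold gamStar
  rw [Measure.smul_apply, Measure.add_apply, Measure.add_apply,
    Measure.map_apply rot_meas measTbad, Measure.map_apply (rot_meas.comp rot_meas) measTbad,
    rot_pre, rotrot_pre, gam0_Tbad]
  simp

lemma mu_univ : mu Set.univ = 1 := by
  unfold mu muL muC muR
  rw [Measure.smul_apply, Measure.add_apply, Measure.add_apply, Measure.smul_apply,
    Measure.smul_apply, Measure.restrict_apply MeasurableSet.univ,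
    Measure.restrict_apply MeasurableSet.univ, Measure.restrict_apply MeasurableSet.univ,
    Set.univ_inter, Set.univ_inter, Set.univ_inter,
    measure_union disjLs (measLset 2), measure_union disjRs (measRset 2)]
  unfold Lset Rset Cset
  rw [Real.volume_Icc, Real.volume_Icc, Real.volume_Icc, Real.volume_Icc, Real.volume_Icc]
  norm_num
  rw [show (1/2:ℝ) = 2⁻¹ by norm_num, ENNReal.ofReal_inv_of_pos (by norm_num),
    ENNReal.ofReal_ofNat]
  have h2 : (2⁻¹ * 2 : ENNReal) = 1 := ENNReal.inv_mul_cancel (by norm_num) (by norm_num)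
  have h2' : (2 * 2⁻¹ : ENNReal) = 1 := ENNReal.mul_inv_cancel (by norm_num) (by norm_num)
  have hh : (2⁻¹ + 2⁻¹ : ENNReal) = 1 := by rw [← two_mul, h2']
  rw [h2, h2', hh, show (1+1+1 : ENNReal) = 3 by norm_num,
    ENNReal.inv_mul_cancel (by norm_num) (by norm_num)]

instance gamStar_prob : IsProbabilityMeasure gamStar := by
  constructor
  have h := congrArg (fun m : Measure ℝ => m Set.univ) (gamStar_marg 0)
  rw [Measure.map_apply (measurable_pi_apply 0) MeasurableSet.univ, Set.preimage_univ] at h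
  rw [h, mu_univ]

lemma gamStar_mem : gamStar ∈ Gamma3 mu := ⟨gamStar_prob, gamStar_marg⟩
def Sset : Set ℝ := Lset 1 ∪ Lset 2 ∪ Cset ∪ Rset 1 ∪ Rset 2

lemma measSset : MeasurableSet Sset :=
  ((((measLset 1).union (measLset 2)).union measCset).union (measRset 1)).union (measRset 2)

lemma closedSset : IsClosed Sset :=
  ((((isClosed_Icc.union isClosed_Icc).union isClosed_Icc).union isClosed_Icc).union isClosed_Icc)

lemma abs_le_ten {t : ℝ} (ht : t ∈ Sset) : |t| ≤ 10 := by
  rw [abs_le]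
  rcases ht with (((h | h) | h) | h) | h <;>
    simp only [Lset, Cset, Rset, Set.mem_Icc] at h <;> norm_num at h <;>
    exact ⟨by linarith [h.1, h.2], by linarith [h.1, h.2]⟩

lemma mu_null_of_null {A : Set ℝ} (hA : MeasurableSet A) (h : volume A = 0) : mu A = 0 := by
  unfold mu muL muC muR
  rw [Measure.smul_apply, Measure.add_apply, Measure.add_apply, Measure.smul_apply,
    Measure.smul_apply, Measure.restrict_apply hA, Measure.restrict_apply hA,
    Measure.restrict_apply hA]
  have z : ∀ B : Set ℝ, volume (A ∩ B) = 0 :=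
    fun B => measure_mono_null Set.inter_subset_left h
  rw [z, z, z]; simp

lemma mu_compl_Sset : mu Ssetᶜ = 0 := by
  unfold mu muL muC muR
  rw [Measure.smul_apply, Measure.add_apply, Measure.add_apply, Measure.smul_apply,
    Measure.smul_apply, Measure.restrict_apply measSset.compl,
    Measure.restrict_apply measSset.compl, Measure.restrict_apply measSset.compl]
  have z : ∀ B : Set ℝ, B ⊆ Sset → volume (Ssetᶜ ∩ B) = 0 := by
    intro B hB
    have he : Ssetᶜ ∩ B = ∅ := by
      ext t; simp only [Set.mem_inter_iff, Set.mem_compl_iff, Set.mem_empty_iff_false, iff_false]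
      rintro ⟨h1, h2⟩; exact h1 (hB h2)
    rw [he]; simp
  rw [z _ (fun t ht => Or.inl (Or.inl (Or.inl ht))),
    z _ (fun t ht => Or.inl (Or.inl (Or.inr ht))),
    z _ (fun t ht => ht.elim (fun h => Or.inl (Or.inr h)) Or.inr)]
  simp

lemma mu_sing : mu {(0:ℝ)} = 0 :=
  mu_null_of_null (measurableSet_singleton 0) Real.volume_singleton
section GammaLemmas

variable {η : Measure (Fin 3 → ℝ)} (hη : η ∈ Gamma3 mu)

lemma marg_apply (hη : η ∈ Gamma3 mu) (i : Fin 3) {A : Set ℝ} (hA : MeasurableSet A) :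
    η ((fun x => x i) ⁻¹' A) = mu A := by
  rw [← hη.2 i, Measure.map_apply (measurable_pi_apply i) hA]

lemma ae_S (hη : η ∈ Gamma3 mu) : ∀ᵐ y ∂η, ∀ i, y i ∈ Sset := by
  rw [MeasureTheory.ae_all_iff]
  intro i
  rw [MeasureTheory.ae_iff]
  have : {y : Fin 3 → ℝ | ¬ y i ∈ Sset} = (fun y : Fin 3 → ℝ => y i) ⁻¹' Ssetᶜ := rfl
  rw [this, marg_apply hη i measSset.compl, mu_compl_Sset]

lemma integrable_of_bound (hη : η ∈ Gamma3 mu) {f : (Fin 3 → ℝ) → ℝ}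
    (hf : Continuous f) (C : ℝ) (hb : ∀ y, (∀ i, y i ∈ Sset) → |f y| ≤ C) :
    Integrable f η := by
  haveI := hη.1
  exact Integrable.mono' (integrable_const C) hf.aestronglyMeasurable
    ((ae_S hη).mono fun y hy => by simpa using hb y hy)

def Msec : ℝ := ∫ t, t ^ 2 ∂mu

lemma moment (hη : η ∈ Gamma3 mu) (i : Fin 3) : ∫ y, (y i) ^ 2 ∂η = Msec := by
  unfold Msec
  rw [← hη.2 i, integral_map (measurable_pi_apply i).aemeasurable
    (Continuous.aestronglyMeasurable (by fun_prop))]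

lemma int_cw (hη : η ∈ Gamma3 mu) :
    ∫ y, cw y ∂η = (∫ y, (y 0 + y 1 + y 2) ^ 2 ∂η) - 9 * Msec := by
  have hcw : ∀ y : Fin 3 → ℝ, cw y =
      (y 0 + y 1 + y 2) ^ 2 - (3 * (y 0) ^ 2 + 3 * (y 1) ^ 2 + 3 * (y 2) ^ 2) := by
    intro y; unfold cw; rw [sq_abs, sq_abs, sq_abs]; ring
  have sqb : ∀ t : ℝ, |t| ≤ 10 → t ^ 2 ≤ 100 := by
    intro t ht
    calc t ^ 2 = |t| ^ 2 := (sq_abs t).symm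
    _ ≤ 10 ^ 2 := by
      apply pow_le_pow_left₀ (abs_nonneg t) ht
    _ = 100 := by norm_num
  have h1 : Integrable (fun y : Fin 3 → ℝ => (y 0 + y 1 + y 2) ^ 2) η := by
    apply integrable_of_bound hη (by fun_prop) 900
    intro y hy
    rw [abs_of_nonneg (by positivity)]
    have h0 := abs_le_ten (hy 0); have h1 := abs_le_ten (hy 1); have h2 := abs_le_ten (hy 2)
    calc (y 0 + y 1 + y 2) ^ 2 = |y 0 + y 1 + y 2| ^ 2 := (sq_abs _).symm
    _ ≤ 30 ^ 2 := by
        apply pow_le_pow_left₀ (abs_nonneg _)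
        calc |y 0 + y 1 + y 2| ≤ |y 0| + |y 1| + |y 2| := abs_add_three _ _ _
        _ ≤ 30 := by linarith
    _ ≤ 900 := by norm_num
  have hsq : ∀ i : Fin 3, Integrable (fun y : Fin 3 → ℝ => (y i) ^ 2) η := by
    intro i
    apply integrable_of_bound hη (by fun_prop) 100
    intro y hy
    rw [abs_of_nonneg (by positivity)]
    exact sqb _ (abs_le_ten (hy i))
  have h2 : Integrable (fun y : Fin 3 → ℝ =>
      3 * (y 0) ^ 2 + 3 * (y 1) ^ 2 + 3 * (y 2) ^ 2) η := by
    exact (((hsq 0).const_mul 3).add ((hsq 1).const_mul 3)).add ((hsq 2).const_mul 3)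
  calc ∫ y, cw y ∂η
      = ∫ y, ((y 0 + y 1 + y 2) ^ 2 - (3 * (y 0) ^ 2 + 3 * (y 1) ^ 2 + 3 * (y 2) ^ 2)) ∂η := by
        apply integral_congr_ae
        filter_upwards [] with y
        exact hcw y
    _ = (∫ y, (y 0 + y 1 + y 2) ^ 2 ∂η)
        - ∫ y, (3 * (y 0) ^ 2 + 3 * (y 1) ^ 2 + 3 * (y 2) ^ 2) ∂η := integral_sub h1 h2
    _ = (∫ y, (y 0 + y 1 + y 2) ^ 2 ∂η) - 9 * Msec := by
        have hI0 : Integrable (fun y : Fin 3 → ℝ => 3 * (y 0) ^ 2) η := (hsq 0).const_mul 3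
        have hI1 : Integrable (fun y : Fin 3 → ℝ => 3 * (y 1) ^ 2) η := (hsq 1).const_mul 3
        have hI2 : Integrable (fun y : Fin 3 → ℝ => 3 * (y 2) ^ 2) η := (hsq 2).const_mul 3
        have hI01 : Integrable (fun y : Fin 3 → ℝ => 3 * (y 0) ^ 2 + 3 * (y 1) ^ 2) η := hI0.add hI1
        rw [integral_add hI01 hI2, integral_add hI0 hI1,
          MeasureTheory.integral_const_mul, MeasureTheory.integral_const_mul, MeasureTheory.integral_const_mul,
          moment hη 0, moment hη 1, moment hη 2]
        ring

end GammaLemmas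

lemma exists_perm (i j l : Fin 3) (hij : i ≠ j) (hil : i ≠ l) (hjl : j ≠ l) :
    ∃ σ : Equiv.Perm (Fin 3), σ 0 = i ∧ σ 1 = j ∧ σ 2 = l := by
  revert hij hil hjl
  revert i j l
  decide

lemma build {x : Fin 3 → ℝ} {k : ℕ} {i j l : Fin 3} (hk : k ∈ ({1, 2} : Set ℕ))
    (hij : i ≠ j) (hil : i ≠ l) (hjl : j ≠ l)
    (hL : x i ∈ Lset k) (hC : x j ∈ Cset) (hR : x l ∈ Rset k) :
    ∃ k ∈ ({1, 2} : Set ℕ), ∃ σ : Equiv.Perm (Fin 3),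
      x (σ 0) ∈ Lset k ∧ x (σ 1) ∈ Cset ∧ x (σ 2) ∈ Rset k := by
  obtain ⟨σ, h0, h1, h2⟩ := exists_perm i j l hij hil hjl
  exact ⟨k, hk, σ, by rw [h0]; exact hL, by rw [h1]; exact hC, by rw [h2]; exact hR⟩

set_option maxHeartbeats 2000000 in
lemma combinatorics {x : Fin 3 → ℝ}
    (hS : ∀ i, x i ∈ Lset 1 ∪ Lset 2 ∪ Cset ∪ Rset 1 ∪ Rset 2)
    (hsum : x 0 + x 1 + x 2 = 0)
    (hne : ¬(x 0 = 0 ∧ x 1 = 0 ∧ x 2 = 0)) :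
    ∃ k ∈ ({1, 2} : Set ℕ), ∃ σ : Equiv.Perm (Fin 3),
      x (σ 0) ∈ Lset k ∧ x (σ 1) ∈ Cset ∧ x (σ 2) ∈ Rset k := by
  have hk1 : (1 : ℕ) ∈ ({1, 2} : Set ℕ) := Or.inl rfl
  have hk2 : (2 : ℕ) ∈ ({1, 2} : Set ℕ) := Or.inr rfl
  obtain (((h0 | h0) | h0) | h0) | h0 := hS 0 <;>
  obtain (((h1 | h1) | h1) | h1) | h1 := hS 1 <;>
  obtain (((h2 | h2) | h2) | h2) | h2 := hS 2 <;>
  first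
    | exact build hk1 (by decide) (by decide) (by decide) h0 h1 h2
    | exact build hk1 (by decide) (by decide) (by decide) h0 h2 h1
    | exact build hk1 (by decide) (by decide) (by decide) h1 h0 h2
    | exact build hk1 (by decide) (by decide) (by decide) h1 h2 h0
    | exact build hk1 (by decide) (by decide) (by decide) h2 h0 h1
    | exact build hk1 (by decide) (by decide) (by decide) h2 h1 h0
    | exact build hk2 (by decide) (by decide) (by decide) h0 h1 h2
    | exact build hk2 (by decide) (by decide) (by decide) h0 h2 h1
    | exact build hk2 (by decide) (by decide) (by decide) h1 h0 h2
    | exact build hk2 (by decide) (by decide) (by decide) h1 h2 h0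
    | exact build hk2 (by decide) (by decide) (by decide) h2 h0 h1
    | exact build hk2 (by decide) (by decide) (by decide) h2 h1 h0
    | (exfalso;
       simp only [Lset, Cset, Rset, Set.mem_Icc] at h0 h1 h2;
       norm_num at h0 h1 h2;
       first
         | linarith [h0.1, h0.2, h1.1, h1.2, h2.1, h2.2]
         | exact hne ⟨by linarith [h0.1, h0.2, h1.1, h1.2, h2.1, h2.2],
             by linarith [h0.1, h0.2, h1.1, h1.2, h2.1, h2.2],
             by linarith [h0.1, h0.2, h1.1, h1.2, h2.1, h2.2]⟩)


lemma integrable_sumsq {η : Measure (Fin 3 → ℝ)} (hη : η ∈ Gamma3 mu) :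
    Integrable (fun y : Fin 3 → ℝ => (y 0 + y 1 + y 2) ^ 2) η := by
  apply integrable_of_bound hη (by fun_prop) 900
  intro y hy
  rw [abs_of_nonneg (by positivity)]
  have h0 := abs_le_ten (hy 0); have h1 := abs_le_ten (hy 1); have h2 := abs_le_ten (hy 2)
  calc (y 0 + y 1 + y 2) ^ 2 = |y 0 + y 1 + y 2| ^ 2 := (sq_abs _).symm
  _ ≤ 30 ^ 2 := by
      apply pow_le_pow_left₀ (abs_nonneg _)
      calc |y 0 + y 1 + y 2| ≤ |y 0| + |y 1| + |y 2| := abs_add_three _ _ _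
      _ ≤ 30 := by linarith
  _ ≤ 900 := by norm_num

lemma int_sumsq_gamStar : ∫ y, (y 0 + y 1 + y 2) ^ 2 ∂gamStar = 0 := by
  apply integral_eq_zero_of_ae
  rw [Filter.EventuallyEq, ae_iff]
  apply measure_mono_null _ gamStar_Tbad
  intro y hy
  simp only [Set.mem_setOf_eq] at hy
  intro hc
  exact hy (by rw [hc]; norm_num)

lemma gamma_Tbad {γ : Measure (Fin 3 → ℝ)} (hγ : γ ∈ Gamma3 mu)
    (hmin : ∀ γ' ∈ Gamma3 mu, ∫ x, cw x ∂γ ≤ ∫ x, cw x ∂γ') : γ Tbad = 0 := by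
  have h1 := int_cw hγ
  have h2 := int_cw gamStar_mem
  have hle := hmin gamStar gamStar_mem
  rw [h1, h2, int_sumsq_gamStar] at hle
  have hle' : ∫ y, (y 0 + y 1 + y 2) ^ 2 ∂γ ≤ 0 := by linarith
  have hge : 0 ≤ ∫ y, (y 0 + y 1 + y 2) ^ 2 ∂γ :=
    integral_nonneg (fun y => by positivity)
  have hzero := le_antisymm hle' hge
  have hae := (integral_eq_zero_iff_of_nonneg (fun y => by positivity)
    (integrable_sumsq hγ)).mp hzero
  rw [Filter.EventuallyEq, ae_iff] at hae
  simp only [Pi.zero_apply] at hae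
  apply measure_mono_null _ hae
  intro y hy
  simp only [Set.mem_setOf_eq]
  intro hc
  exact hy (pow_eq_zero_iff (by norm_num : (2:ℕ) ≠ 0) |>.mp hc)

lemma sset_small_nonneg {t : ℝ} (ht : t ∈ Sset) (h : -(1/8 : ℝ) < t) : 0 ≤ t := by
  rcases ht with (((hh | hh) | hh) | hh) | hh <;>
    simp only [Lset, Cset, Rset, Set.mem_Icc] at hh <;> norm_num at hh <;>
    linarith [hh.1, hh.2]

theorem support_structure_of_minimizers
    (γ : Measure (Fin 3 → ℝ)) (hγ : γ ∈ Gamma3 mu)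
    (hmin : ∀ γ' ∈ Gamma3 mu, ∫ x, cw x ∂γ ≤ ∫ x, cw x ∂γ')
    (x : Fin 3 → ℝ) (hx : x ∈ msupp γ) :
    ∃ k ∈ ({1, 2} : Set ℕ), ∃ σ : Equiv.Perm (Fin 3),
      x (σ 0) ∈ Lset k ∧ x (σ 1) ∈ Cset ∧ x (σ 2) ∈ Rset k := by
  -- each coordinate lies in Sset
  have hS : ∀ i, x i ∈ Sset := by
    intro i
    by_contra hnot
    have hopen : IsOpen ((fun y : Fin 3 → ℝ => y i) ⁻¹' Ssetᶜ) :=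
      closedSset.isOpen_compl.preimage (continuous_apply i)
    have hpos := hx _ hopen hnot
    rw [marg_apply hγ i measSset.compl, mu_compl_Sset] at hpos
    exact lt_irrefl 0 hpos
  -- the sum of coordinates vanishes
  have hTopen : IsOpen Tbad := by
    have : Tbad = (fun y : Fin 3 → ℝ => y 0 + y 1 + y 2) ⁻¹' ({0}ᶜ) := rfl
    rw [this]
    exact (isClosed_singleton.isOpen_compl).preimage
      (((continuous_apply 0).add (continuous_apply 1)).add (continuous_apply 2))
  have hsum : x 0 + x 1 + x 2 = 0 := by
    by_contra hnot
    have hpos := hx Tbad hTopen hnot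
    rw [gamma_Tbad hγ hmin] at hpos
    exact lt_irrefl 0 hpos
  -- not all coordinates are zero
  have hne : ¬(x 0 = 0 ∧ x 1 = 0 ∧ x 2 = 0) := by
    rintro ⟨hx0, hx1, hx2⟩
    set U : Set (Fin 3 → ℝ) :=
      (fun y : Fin 3 → ℝ => y 0) ⁻¹' Set.Ioo (-(1/8)) (1/8) ∩
      ((fun y : Fin 3 → ℝ => y 1) ⁻¹' Set.Ioo (-(1/8)) (1/8) ∩
       (fun y : Fin 3 → ℝ => y 2) ⁻¹' Set.Ioo (-(1/8)) (1/8)) with hU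
    have hUopen : IsOpen U :=
      (isOpen_Ioo.preimage (continuous_apply 0)).inter
        ((isOpen_Ioo.preimage (continuous_apply 1)).inter
          (isOpen_Ioo.preimage (continuous_apply 2)))
    have hxU : x ∈ U := by
      refine ⟨?_, ?_, ?_⟩ <;> rw [Set.mem_preimage] <;>
        simp only [hx0, hx1, hx2] <;> exact ⟨by norm_num, by norm_num⟩
    have hpos := hx U hUopen hxU
    -- U is contained in a union of three null sets
    have hsub : U ⊆ ((fun y : Fin 3 → ℝ => y 0) ⁻¹' ({0} : Set ℝ)) ∪
        ({y : Fin 3 → ℝ | ¬ ∀ i, y i ∈ Sset} ∪ Tbad) := by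
      intro y hy
      by_cases hyS : ∀ i, y i ∈ Sset
      · by_cases hyT : y ∈ Tbad
        · exact Or.inr (Or.inr hyT)
        · left
          have hsum0 : y 0 + y 1 + y 2 = 0 := not_not.mp hyT
          obtain ⟨hy0, hy1, hy2⟩ := hy
          have n0 := sset_small_nonneg (hyS 0) hy0.1
          have n1 := sset_small_nonneg (hyS 1) hy1.1
          have n2 := sset_small_nonneg (hyS 2) hy2.1
          show y 0 ∈ ({0} : Set ℝ)
          simp only [Set.mem_singleton_iff]
          linarith
      · exact Or.inr (Or.inl hyS)
    have hnull : γ (((fun y : Fin 3 → ℝ => y 0) ⁻¹' ({0} : Set ℝ)) ∪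
        ({y : Fin 3 → ℝ | ¬ ∀ i, y i ∈ Sset} ∪ Tbad)) = 0 := by
      apply measure_union_null
      · rw [marg_apply hγ 0 (measurableSet_singleton 0)]
        exact mu_sing
      apply measure_union_null
      · have h := ae_S hγ
        rw [ae_iff] at h
        apply measure_mono_null _ h
        intro y hy
        exact hy
      · exact gamma_Tbad hγ hmin
    have := measure_mono_null hsub hnull
    rw [this] at hpos
    exact lt_irrefl 0 hpos
  exact combinatorics hS hsum hne

end
end

section
/- Let μ₁,…,μ_N be Borel probability measures on ℝ^d with finite first moments, let h : ℝ^d → [0,∞) be convex, and set c_h(x₁,…,x_N) = h(x₁ + ⋯ + x_N). If γ ∈ Γ(μ₁,…,μ_N) is concentrated on a hyperplane {(x₁,…,x_N) : x₁ + ⋯ + x_N = k} for some k ∈ ℝ^d (i.e., its support is contained in this set), then γ minimizes ∫ c_h dγ over Γ(μ₁,…,μ_N). -/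
open MeasureTheory

noncomputable section

abbrev Euc (d : ℕ) := EuclideanSpace ℝ (Fin d)

/-- `Γ(μ₁, …, μ_N)`: probability measures on `(ℝ^d)^N` whose `i`-th marginal is `μ i`. -/
def Plans (d N : ℕ) (μ : Fin N → Measure (Euc d)) : Set (Measure (Fin N → Euc d)) :=
  {γ | IsProbabilityMeasure γ ∧ ∀ i : Fin N, γ.map (fun x => x i) = μ i}

/-- The complement of the support is null in a second countable space. -/
lemma msupp_compl_null {α : Type*} [TopologicalSpace α] [SecondCountableTopology α]
    [MeasurableSpace α] [OpensMeasurableSpace α] (γ : Measure α) : γ (msupp γ)ᶜ = 0 := by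
  classical
  set T : Set (Set α) := {b ∈ TopologicalSpace.countableBasis α | γ b = 0} with hT
  have hTc : T.Countable := (TopologicalSpace.countable_countableBasis α).mono
    (Set.sep_subset _ _)
  have hsub : (msupp γ)ᶜ ⊆ ⋃₀ T := by
    intro x hx
    simp only [msupp, Set.mem_compl_iff, Set.mem_setOf_eq, not_forall] at hx
    obtain ⟨U, hU, hxU, hγU⟩ := hx
    have hγU0 : γ U = 0 := by
      by_contra hne
      exact hγU (pos_iff_ne_zero.mpr hne)
    obtain ⟨b, hb, hxb, hbU⟩ :=
      (TopologicalSpace.isBasis_countableBasis α).exists_subset_of_mem_open hxU hU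
    refine Set.mem_sUnion.mpr ⟨b, ⟨hb, le_antisymm ?_ bot_le⟩, hxb⟩
    exact hγU0 ▸ measure_mono hbU
  refine measure_mono_null hsub ?_
  refine (measure_sUnion_null_iff hTc).mpr ?_
  intro s hs
  exact hs.2

theorem concentrated_on_hyperplane_implies_optimal
    (d N : ℕ) (μ : Fin N → Measure (Euc d))
    (hprob : ∀ i, IsProbabilityMeasure (μ i))
    (hmom : ∀ i, Integrable (fun x => ‖x‖) (μ i))
    (h : Euc d → ℝ) (hconv : ConvexOn ℝ Set.univ h) (hpos : ∀ x, 0 ≤ h x)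
    (γ : Measure (Fin N → Euc d)) (hγ : γ ∈ Plans d N μ)
    (k : Euc d) (hsupp : msupp γ ⊆ {x : Fin N → Euc d | ∑ i, x i = k}) :
    ∀ γ' ∈ Plans d N μ,
      ∫⁻ x, ENNReal.ofReal (h (∑ i, x i)) ∂γ ≤ ∫⁻ x, ENNReal.ofReal (h (∑ i, x i)) ∂γ' := by
  intro γ' hγ'
  have hγprob : IsProbabilityMeasure γ := hγ.1
  have hγ'prob : IsProbabilityMeasure γ' := hγ'.1
  -- continuity of h
  have hcont : Continuous h := by
    rw [← continuousOn_univ]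
    exact hconv.continuousOn isOpen_univ
  -- a.e. sum equals k for γ
  have hae : ∀ᵐ x ∂γ, ∑ i, x i = k := by
    refine measure_mono_null ?_ (msupp_compl_null γ)
    intro x hx
    exact fun hmem => hx (hsupp hmem)
  -- measurability of the sum map
  have hsum_meas : Measurable (fun x : Fin N → Euc d => ∑ i, x i) :=
    Finset.measurable_sum _ (fun i _ => measurable_pi_apply i)
  -- integrability of identity w.r.t. μ i
  have hid_int : ∀ i, Integrable (fun y : Euc d => y) (μ i) := fun i =>
    (integrable_norm_iff measurable_id.aestronglyMeasurable).mp (hmom i)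
  -- integrability and value of coordinates for any plan
  have key : ∀ γ'' : Measure (Fin N → Euc d), γ'' ∈ Plans d N μ →
      Integrable (fun x : Fin N → Euc d => ∑ i, x i) γ'' ∧
      ∫ x, ∑ i, x i ∂γ'' = ∑ i, ∫ y, y ∂(μ i) := by
    intro γ'' hγ''
    have hcoord : ∀ i, Integrable (fun x : Fin N → Euc d => x i) γ'' := by
      intro i
      have := (hid_int i)
      rw [← hγ''.2 i] at this
      exact (integrable_map_measure measurable_id.aestronglyMeasurable
        (measurable_pi_apply i).aemeasurable).mp this
    have hint : Integrable (fun x : Fin N → Euc d => ∑ i, x i) γ'' :=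
      integrable_finset_sum _ (fun i _ => hcoord i)
    refine ⟨hint, ?_⟩
    rw [integral_finset_sum _ (fun i _ => hcoord i)]
    refine Finset.sum_congr rfl fun i _ => ?_
    have : ∫ y, y ∂((γ''.map (fun x => x i))) = ∫ x, x i ∂γ'' :=
      integral_map (measurable_pi_apply i).aemeasurable
        measurable_id.aestronglyMeasurable
    rw [← hγ''.2 i, this]
  -- the common barycenter is k
  have hbar : ∑ i, ∫ y, y ∂(μ i) = k := by
    rw [← (key γ hγ).2]
    have : ∫ x, ∑ i, x i ∂γ = ∫ _x, k ∂γ := integral_congr_ae hae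
    rw [this, integral_const, probReal_univ, one_smul]
  -- LHS equals ofReal (h k)
  have hLHS : ∫⁻ x, ENNReal.ofReal (h (∑ i, x i)) ∂γ = ENNReal.ofReal (h k) := by
    have : ∫⁻ x, ENNReal.ofReal (h (∑ i, x i)) ∂γ
        = ∫⁻ _x, ENNReal.ofReal (h k) ∂γ := by
      apply lintegral_congr_ae
      filter_upwards [hae] with x hx
      rw [hx]
    rw [this, lintegral_const, measure_univ, mul_one]
  rw [hLHS]
  by_cases hfin : ∫⁻ x, ENNReal.ofReal (h (∑ i, x i)) ∂γ' = ⊤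
  · exact hfin ▸ le_top
  -- h ∘ sum is integrable w.r.t. γ'
  have hmeas_g : Measurable (fun x : Fin N → Euc d => h (∑ i, x i)) :=
    hcont.measurable.comp hsum_meas
  have hgint : Integrable (fun x : Fin N → Euc d => h (∑ i, x i)) γ' := by
    refine ⟨hmeas_g.aestronglyMeasurable, ?_⟩
    rw [hasFiniteIntegral_iff_ofReal (Filter.Eventually.of_forall (fun x => hpos _))]
    exact lt_top_iff_ne_top.mpr hfin
  -- convert RHS lintegral to an integral
  have hRHS : ∫⁻ x, ENNReal.ofReal (h (∑ i, x i)) ∂γ'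
      = ENNReal.ofReal (∫ x, h (∑ i, x i) ∂γ') := by
    rw [← ofReal_integral_eq_lintegral_ofReal hgint
      (Filter.Eventually.of_forall (fun x => hpos _))]
  rw [hRHS]
  apply ENNReal.ofReal_le_ofReal
  -- Jensen's inequality
  have := hconv.map_integral_le hcont.continuousOn isClosed_univ
    (Filter.Eventually.of_forall (fun x => Set.mem_univ _)) (key γ' hγ').1 hgint
  rw [(key γ' hγ').2, hbar] at this
  exact this
end
end

section
/- Let N = 2m be even and let μ = ρ·Leb^d be an absolutely continuous Borel probability measure on ℝ^d with finite second moments whose density satisfies ρ(−x) = ρ(x) for all x (in particular, any radially symmetric ρ). Then the plan γ = (x ↦ (x, −x, x, −x, …, x, −x))♯μ, i.e., the plan induced by the iterates of T(x) = −x, belongs to Γ_N(μ) and minimizes ∫ c_w dγ over Γ_N(μ). -/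
open MeasureTheory

noncomputable section

/-- The repulsive harmonic cost on `(ℝ^d)^N`. -/
def cwN (d N : ℕ) (x : Fin N → Euc d) : ℝ :=
  -∑ i : Fin N, ∑ j ∈ Finset.Ioi i, ‖x i - x j‖ ^ 2

/-- `Γ_N(μ)`: probability measures on `(ℝ^d)^N` with all `N` marginals equal to `μ`. -/
def GammaN (d N : ℕ) (μ : Measure (Euc d)) : Set (Measure (Fin N → Euc d)) :=
  {γ | IsProbabilityMeasure γ ∧ ∀ i : Fin N, γ.map (fun x => x i) = μ}

/-- The plan induced by the iterates of `T(x) = −x`: `x ↦ (x, −x, x, −x, …)`. -/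
def alternatingPlan (d N : ℕ) (μ : Measure (Euc d)) : Measure (Fin N → Euc d) :=
  μ.map (fun x => fun i : Fin N => if (i : ℕ) % 2 = 0 then x else -x)

lemma sum_Ioi_swap {N : ℕ} {M : Type*} [AddCommMonoid M] (g : Fin N → Fin N → M) :
    ∑ i, ∑ j ∈ Finset.Ioi i, g i j = ∑ j, ∑ i ∈ Finset.Iio j, g i j := by
  rw [Finset.sum_sigma', Finset.sum_sigma']
  refine Finset.sum_nbij' (fun x => ⟨x.2, x.1⟩) (fun x => ⟨x.2, x.1⟩) ?_ ?_ (fun _ _ => rfl)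
    (fun _ _ => rfl) (fun _ _ => rfl) <;> simp

lemma sum_row_split {N : ℕ} {M : Type*} [AddCommMonoid M] (i : Fin N) (f : Fin N → M) :
    ∑ j, f j = (∑ j ∈ Finset.Iio i, f j) + f i + ∑ j ∈ Finset.Ioi i, f j := by
  rw [add_assoc, ← Finset.sum_insert (by simp), Finset.Ioi_insert,
    ← Finset.sum_union (by simp [Finset.disjoint_left])]
  congr 1
  ext j
  simp [lt_or_ge]

lemma double_sum_eq {N : ℕ} (F : Fin N → Fin N → ℝ) (hdiag : ∀ i, F i i = 0)
    (hsym : ∀ i j, F j i = F i j) :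
    ∑ i, ∑ j, F i j = 2 * ∑ i, ∑ j ∈ Finset.Ioi i, F i j := by
  have h1 : ∑ i, ∑ j, F i j
      = ∑ i, ((∑ j ∈ Finset.Iio i, F i j) + F i i + ∑ j ∈ Finset.Ioi i, F i j) :=
    Finset.sum_congr rfl fun i _ => sum_row_split i (F i)
  have h2 : ∑ i, ∑ j ∈ Finset.Iio i, F i j = ∑ i, ∑ j ∈ Finset.Ioi i, F i j := by
    rw [← sum_Ioi_swap (fun i j => F j i)]
    exact Finset.sum_congr rfl fun i _ => Finset.sum_congr rfl fun j _ => hsym i j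
  simp only [h1, hdiag, add_zero, Finset.sum_add_distrib, h2]
  ring

lemma cw_identity {E : Type*} [NormedAddCommGroup E] [InnerProductSpace ℝ E]
    {N : ℕ} (f : Fin N → E) :
    ∑ i, ∑ j ∈ Finset.Ioi i, ‖f i - f j‖ ^ 2
      = N * ∑ i, ‖f i‖ ^ 2 - ‖∑ i, f i‖ ^ 2 := by
  have hS : ‖∑ i, f i‖ ^ 2 = ∑ i, ∑ j, (inner ℝ (f i) (f j) : ℝ) := by
    rw [← real_inner_self_eq_norm_sq, sum_inner]
    exact Finset.sum_congr rfl fun i _ => inner_sum _ _ _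
  have hd := double_sum_eq (fun i j => ‖f i - f j‖ ^ 2) (by simp)
    (fun i j => by show ‖f j - f i‖ ^ 2 = ‖f i - f j‖ ^ 2; rw [norm_sub_rev])
  have hexp : ∑ i, ∑ j, ‖f i - f j‖ ^ 2
      = 2 * (N * ∑ i, ‖f i‖ ^ 2) - 2 * ‖∑ i, f i‖ ^ 2 := by
    have : ∀ i j : Fin N, ‖f i - f j‖ ^ 2
        = ‖f i‖ ^ 2 + ‖f j‖ ^ 2 - 2 * (inner ℝ (f i) (f j) : ℝ) := fun i j => by
      rw [@norm_sub_sq_real]; ring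
    simp only [this, Finset.sum_sub_distrib, Finset.sum_add_distrib, Finset.sum_const,
      Finset.card_univ, Fintype.card_fin, ← Finset.mul_sum, ← Finset.sum_mul, hS,
      nsmul_eq_mul]
    ring
  linarith [hd ▸ hexp]

lemma alt_sum_zero {E : Type*} [AddCommGroup E] (m : ℕ) (x : E) :
    ∑ i : Fin (2 * m), (if (i : ℕ) % 2 = 0 then x else -x) = 0 := by
  rw [Fin.sum_univ_eq_sum_range (fun i => if i % 2 = 0 then x else -x)]
  induction m with
  | zero => simp
  | succ n ih =>
    rw [Nat.mul_succ, Finset.sum_range_succ, Finset.sum_range_succ, ih]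
    have h1 : (2 * n) % 2 = 0 := by omega
    have h2 : (2 * n + 1) % 2 = 1 := by omega
    simp [h1, h2]

lemma cwN_alt (d m : ℕ) (x : Euc d) :
    cwN d (2 * m) (fun i : Fin (2 * m) => if (i : ℕ) % 2 = 0 then x else -x)
      = -(((2 * m : ℕ) : ℝ) ^ 2 * ‖x‖ ^ 2) := by
  unfold cwN
  rw [cw_identity]
  rw [alt_sum_zero]
  have : ∑ i : Fin (2 * m), ‖if (i : ℕ) % 2 = 0 then x else -x‖ ^ 2
      = ((2 * m : ℕ) : ℝ) * ‖x‖ ^ 2 := by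
    have h : ∀ i : Fin (2 * m), ‖if (i : ℕ) % 2 = 0 then x else -x‖ ^ 2 = ‖x‖ ^ 2 :=
      fun i => by split <;> simp
    simp only [h, Finset.sum_const, Finset.card_univ, Fintype.card_fin, nsmul_eq_mul]
  rw [this]
  simp
  ring

lemma map_neg_withDensity (d : ℕ) (ρ : Euc d → ENNReal) (hρ : Measurable ρ)
    (hsymm : ∀ x : Euc d, ρ (-x) = ρ x) :
    (volume.withDensity ρ).map (fun x => -x) = volume.withDensity ρ := by
  have hneg : Measurable (fun x : Euc d => -x) := measurable_neg
  ext s hs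
  rw [Measure.map_apply hneg hs, withDensity_apply _ (hneg hs), withDensity_apply _ hs]
  have hvol : (volume : Measure (Euc d)).map (fun x => -x) = volume :=
    Measure.map_neg_eq_self volume
  conv_rhs => rw [← hvol]
  rw [setLIntegral_map hs hρ hneg]
  simp only [hsymm]

theorem alternating_plan_optimal_even
    (d m : ℕ) (hm : 1 ≤ m) (ρ : Euc d → ENNReal) (hρ : Measurable ρ)
    (hsymm : ∀ x : Euc d, ρ (-x) = ρ x)
    (hprob : IsProbabilityMeasure (volume.withDensity ρ))
    (hmom : Integrable (fun x => ‖x‖ ^ 2) (volume.withDensity ρ)) :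
    alternatingPlan d (2 * m) (volume.withDensity ρ) ∈ GammaN d (2 * m) (volume.withDensity ρ) ∧
    ∀ γ ∈ GammaN d (2 * m) (volume.withDensity ρ),
      ∫ x, cwN d (2 * m) x ∂(alternatingPlan d (2 * m) (volume.withDensity ρ)) ≤
        ∫ x, cwN d (2 * m) x ∂γ := by
  set μ := volume.withDensity ρ with hμdef
  have hFmeas : Measurable (fun x : Euc d =>
      fun i : Fin (2 * m) => if (i : ℕ) % 2 = 0 then x else -x) := by
    apply measurable_pi_lambda
    intro i
    by_cases h : (i : ℕ) % 2 = 0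
    · simpa [h] using measurable_id' (α := Euc d)
    · simpa [h] using (measurable_neg : Measurable (fun x : Euc d => -x))
  have hcw_cont : Continuous (cwN d (2 * m)) := by
    unfold cwN
    apply Continuous.neg
    apply continuous_finset_sum
    intro i _
    apply continuous_finset_sum
    intro j _
    exact ((continuous_apply i).sub (continuous_apply j)).norm.pow 2
  have hmapneg : μ.map (fun x => -x) = μ := map_neg_withDensity d ρ hρ hsymm
  have hplan : alternatingPlan d (2 * m) μ
      = μ.map (fun x => fun i : Fin (2 * m) => if (i : ℕ) % 2 = 0 then x else -x) := rfl
  have hmarg : ∀ i : Fin (2 * m),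
      (alternatingPlan d (2 * m) μ).map (fun x => x i) = μ := by
    intro i
    rw [hplan, Measure.map_map (measurable_pi_apply i) hFmeas]
    have hcomp : ((fun x : Fin (2 * m) → Euc d => x i) ∘
        (fun x : Euc d => fun i : Fin (2 * m) => if (i : ℕ) % 2 = 0 then x else -x))
        = fun x : Euc d => if (i : ℕ) % 2 = 0 then x else -x := rfl
    rw [hcomp]
    by_cases h : (i : ℕ) % 2 = 0
    · simp only [h, if_true]
      exact Measure.map_id
    · simp only [h, if_false]
      exact hmapneg
  have hmem : alternatingPlan d (2 * m) μ ∈ GammaN d (2 * m) μ := by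
    refine ⟨?_, hmarg⟩
    rw [hplan]
    exact Measure.isProbabilityMeasure_map hFmeas.aemeasurable
  refine ⟨hmem, ?_⟩
  set M := ∫ x, ‖x‖ ^ 2 ∂μ with hMdef
  have hM0 : 0 ≤ M := integral_nonneg fun x => by positivity
  have hplanval : ∫ x, cwN d (2 * m) x ∂(alternatingPlan d (2 * m) μ)
      = -(((2 * m : ℕ) : ℝ) ^ 2 * M) := by
    rw [hplan, integral_map hFmeas.aemeasurable hcw_cont.aestronglyMeasurable]
    have : ∀ x : Euc d,
        cwN d (2 * m) (fun i : Fin (2 * m) => if (i : ℕ) % 2 = 0 then x else -x)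
          = -(((2 * m : ℕ) : ℝ) ^ 2 * ‖x‖ ^ 2) := cwN_alt d m
    simp only [this]
    rw [integral_neg, integral_const_mul]
  rintro γ ⟨hγp, hγm⟩
  rw [hplanval]
  by_cases hint : Integrable (cwN d (2 * m)) γ
  · have hproji : ∀ i : Fin (2 * m),
        Integrable (fun x : Fin (2 * m) → Euc d => ‖x i‖ ^ 2) γ := by
      intro i
      have h1 : Integrable (fun y : Euc d => ‖y‖ ^ 2) (γ.map (fun x => x i)) := by
        rw [hγm i]; exact hmom
      have h2 := (integrable_map_measure (μ := γ) (f := fun x => x i)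
        (continuous_norm.pow 2 : Continuous fun y : Euc d => ‖y‖ ^ 2).aestronglyMeasurable
        (measurable_pi_apply i).aemeasurable).mp h1
      simpa [Function.comp_def, Pi.pow_apply] using h2
    have hHint : Integrable (fun x : Fin (2 * m) → Euc d => ∑ i, ‖x i‖ ^ 2) γ :=
      integrable_finset_sum _ (fun i _ => hproji i)
    have hHval : ∫ x, (∑ i, ‖x i‖ ^ 2) ∂γ = ((2 * m : ℕ) : ℝ) * M := by
      rw [integral_finset_sum _ (fun i _ => hproji i)]
      have h2 : ∀ i : Fin (2 * m), ∫ x, ‖x i‖ ^ 2 ∂γ = M := by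
        intro i
        rw [hMdef, ← hγm i,
          integral_map (measurable_pi_apply i).aemeasurable
            (continuous_norm.pow 2 : Continuous fun y : Euc d => ‖y‖ ^ 2).aestronglyMeasurable]
      simp only [h2, Finset.sum_const, Finset.card_univ, Fintype.card_fin, nsmul_eq_mul]
    have hpt : cwN d (2 * m) = fun x : Fin (2 * m) → Euc d =>
        ‖∑ i, x i‖ ^ 2 - ((2 * m : ℕ) : ℝ) * ∑ i, ‖x i‖ ^ 2 := by
      funext x
      unfold cwN
      rw [cw_identity]
      ring
    have hSqint : Integrable (fun x : Fin (2 * m) → Euc d => ‖∑ i, x i‖ ^ 2) γ := by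
      have h3 : (fun x : Fin (2 * m) → Euc d => ‖∑ i, x i‖ ^ 2)
          = fun x => cwN d (2 * m) x + ((2 * m : ℕ) : ℝ) * ∑ i, ‖x i‖ ^ 2 := by
        funext x
        rw [hpt]
        ring
      rw [h3]
      exact hint.add (hHint.const_mul _)
    have hsplit : ∫ x, cwN d (2 * m) x ∂γ
        = (∫ x, ‖∑ i, x i‖ ^ 2 ∂γ) - ((2 * m : ℕ) : ℝ) * ∫ x, (∑ i, ‖x i‖ ^ 2) ∂γ := by
      conv_lhs => rw [hpt]
      rw [integral_sub hSqint (hHint.const_mul _), integral_const_mul]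
    have hpos : 0 ≤ ∫ x, ‖∑ i, x i‖ ^ 2 ∂γ := integral_nonneg fun x => by positivity
    rw [hsplit, hHval]
    nlinarith [sq_nonneg (((2 * m : ℕ) : ℝ))]
  · rw [integral_undef hint]
    have : 0 ≤ ((2 * m : ℕ) : ℝ) ^ 2 * M := by positivity
    linarith

end
end

section
/- Fix N ≥ 3. For z ∈ [0,1) let z = Σ_{k≥1} a_k N^{−k} with digits a_k ∈ {0,…,N−1} be the base-N expansion that is not eventually equal to N−1, and define T(z) = Σ_{k≥1} S(a_k) N^{−k}, where S(i) = i + 1 for i ∈ {0,…,N−2} and S(N−1) = 0. Then T pushes Lebesgue measure on [0,1) forward to itself, and z + T(z) + T²(z) + ⋯ + T^{N−1}(z) = N/2 for Lebesgue-almost every z ∈ [0,1). -/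
open MeasureTheory

noncomputable section

/-- The `k`-th digit (for `k ≥ 1`) of the base-`N` expansion of `z` that is not eventually
equal to `N − 1`: `a_k = ⌊z·N^k⌋ mod N`. -/
def digit (N : ℕ) (z : ℝ) (k : ℕ) : ℤ := ⌊z * (N : ℝ) ^ k⌋ % N

/-- The base-`N` digit-cycling map `T(z) = Σ_k S(a_k) N^{−k}`, where `S(i) = i + 1 mod N`
(i.e. `S(i) = i + 1` for `i < N − 1` and `S(N−1) = 0`). -/
def Tmap (N : ℕ) (z : ℝ) : ℝ :=
  ∑' k : ℕ, (((digit N z (k + 1) + 1) % N : ℤ) : ℝ) / (N : ℝ) ^ (k + 1)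

namespace DC
variable {N : ℕ}
variable {N : ℕ}

lemma digit_nonneg (hN : 0 < N) (z : ℝ) (k : ℕ) : 0 ≤ digit N z k :=
  Int.emod_nonneg _ (by exact_mod_cast hN.ne')

lemma digit_lt (hN : 0 < N) (z : ℝ) (k : ℕ) : digit N z k < N :=
  Int.emod_lt_of_pos _ (by exact_mod_cast hN)

lemma digit_succ_eq (hN : 0 < N) (z : ℝ) (k : ℕ) :
    digit N z (k + 1) = ⌊z * (N : ℝ) ^ (k + 1)⌋ - N * ⌊z * (N : ℝ) ^ k⌋ := by
  have hNR : (0:ℝ) < N := by exact_mod_cast hN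
  set A := ⌊z * (N : ℝ) ^ (k + 1)⌋
  set B := ⌊z * (N : ℝ) ^ k⌋
  have h1 : (N : ℤ) * B ≤ A := by
    rw [Int.le_floor]
    push_cast
    calc (N:ℝ) * B ≤ N * (z * N ^ k) := by
          have := Int.floor_le (z * (N:ℝ) ^ k)
          nlinarith
      _ = z * N ^ (k+1) := by ring
  have h2 : A < N * B + N := by
    rw [show (N:ℤ) * B + N = N * (B + 1) by ring]
    have hlt : z * (N:ℝ) ^ k < B + 1 := Int.lt_floor_add_one _
    have : z * (N:ℝ) ^ (k+1) < N * (B + 1) := by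
      have : (N:ℝ) * (z * N ^ k) < N * (B + 1) := by nlinarith
      calc z * (N:ℝ) ^ (k+1) = N * (z * N ^ k) := by ring
        _ < _ := this
    exact Int.floor_lt.mpr (by push_cast; linarith)
  have hd : digit N z (k+1) = A % N := rfl
  have hmod : A % (N:ℤ) = (A - N * B) % N := by
    rw [Int.sub_emod, Int.mul_emod_right]
    simp [Int.emod_emod_of_dvd]
  rw [hd, hmod, Int.emod_eq_of_lt (by omega) (by omega)]

/-- weighted digit sum: `Σ_{k<n} e k * N^(n-1-k)` -/
def Psi (N n : ℕ) (e : ℕ → ℤ) : ℤ := ∑ k ∈ Finset.range n, e k * (N:ℤ) ^ (n - 1 - k)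

lemma Psi_succ (n : ℕ) (e : ℕ → ℤ) : Psi N (n+1) e = N * Psi N n e + e n := by
  unfold Psi
  rw [Finset.sum_range_succ]
  have h2 : e n * (N:ℤ)^(n+1-1-n) = e n := by
    rw [show n+1-1-n = 0 by omega, pow_zero, mul_one]
  rw [h2, Finset.mul_sum]
  congr 1
  apply Finset.sum_congr rfl
  intro k hk
  have hk' : k < n := Finset.mem_range.mp hk
  rw [show n + 1 - 1 - k = (n - 1 - k) + 1 by omega]
  ring

lemma Psi_congr (n : ℕ) {e e' : ℕ → ℤ} (h : ∀ k < n, e k = e' k) : Psi N n e = Psi N n e' :=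
  Finset.sum_congr rfl fun k hk => by rw [h k (Finset.mem_range.mp hk)]

lemma Psi_nonneg (n : ℕ) {e : ℕ → ℤ} (he : ∀ k, 0 ≤ e k) : 0 ≤ Psi N n e :=
  Finset.sum_nonneg fun k _ => mul_nonneg (he k) (pow_nonneg (by positivity) _)

lemma Psi_lt (hN : 0 < N) (n : ℕ) {e : ℕ → ℤ} (he : ∀ k, 0 ≤ e k ∧ e k < N) :
    Psi N n e < (N:ℤ) ^ n := by
  induction n with
  | zero => simp [Psi]
  | succ n ih =>
    rw [Psi_succ]
    have h1 : Psi N n e ≤ (N:ℤ)^n - 1 := by omega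
    have hNZ : (1:ℤ) ≤ N := by exact_mod_cast hN
    have := (he n).2
    calc (N:ℤ) * Psi N n e + e n ≤ N * ((N:ℤ)^n - 1) + (N - 1) := by
          have := (he n).2
          have h2 : (N:ℤ) * Psi N n e ≤ N * ((N:ℤ)^n - 1) := by
            apply mul_le_mul_of_nonneg_left h1 (by omega)
          omega
      _ = (N:ℤ)^(n+1) - 1 := by ring
      _ < (N:ℤ)^(n+1) := by omega

lemma Psi_inj (hN : 0 < N) (n : ℕ) {e e' : ℕ → ℤ} (he : ∀ k, 0 ≤ e k ∧ e k < N)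
    (he' : ∀ k, 0 ≤ e' k ∧ e' k < N) (h : Psi N n e = Psi N n e') : ∀ k < n, e k = e' k := by
  induction n with
  | zero => omega
  | succ n ih =>
    rw [Psi_succ, Psi_succ] at h
    have hNZ : (0:ℤ) < N := by exact_mod_cast hN
    have h1 : e n = e' n := by
      have := (he n); have := (he' n)
      have hm : ((N:ℤ) * Psi N n e + e n) % N = ((N:ℤ) * Psi N n e' + e' n) % N := by rw [h]
      rwa [add_comm, add_comm ((N:ℤ) * Psi N n e'), Int.add_mul_emod_self_left,
        Int.add_mul_emod_self_left, Int.emod_eq_of_lt (he n).1 (he n).2,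
        Int.emod_eq_of_lt (he' n).1 (he' n).2] at hm
    have h2 : Psi N n e = Psi N n e' := by
      have : (N:ℤ) * Psi N n e = N * Psi N n e' := by omega
      exact mul_left_cancel₀ (by omega) this
    intro k hk
    rcases Nat.lt_succ_iff_lt_or_eq.mp hk with hk' | rfl
    · exact ih h2 k hk'
    · exact h1

lemma Psi_surj (hN : 0 < N) (n : ℕ) (m : ℤ) (h0 : 0 ≤ m) (h1 : m < (N:ℤ)^n) :
    ∃ e : ℕ → ℤ, (∀ k, 0 ≤ e k ∧ e k < N) ∧ Psi N n e = m := by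
  induction n generalizing m with
  | zero =>
    refine ⟨fun _ => 0, fun k => ⟨le_refl _, by show (0:ℤ) < N; exact_mod_cast hN⟩, ?_⟩
    simp only [pow_zero] at h1
    simp [Psi]; omega
  | succ n ih =>
    have hNZ : (0:ℤ) < N := by exact_mod_cast hN
    obtain ⟨e, he, hPsi⟩ := ih (m / N) (Int.ediv_nonneg h0 hNZ.le)
      (by rw [Int.ediv_lt_iff_lt_mul hNZ]; calc m < (N:ℤ)^(n+1) := h1
            _ = (N:ℤ)^n * N := by ring)
    refine ⟨fun k => if k = n then m % N else e k, fun k => ?_, ?_⟩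
    · rcases eq_or_ne k n with rfl | hk
      · simpa using ⟨Int.emod_nonneg m hNZ.ne', Int.emod_lt_of_pos m hNZ⟩
      · simpa [hk] using he k
    · rw [Psi_succ, Psi_congr n (e' := e) (fun k hk => by simp [Nat.ne_of_lt hk]), hPsi]
      simp only [if_pos rfl]
      exact Int.mul_ediv_add_emod m N

lemma floor_eq_Psi (hN : 0 < N) {z : ℝ} (hz : z ∈ Set.Ico (0:ℝ) 1) (n : ℕ) :
    ⌊z * (N:ℝ)^n⌋ = Psi N n (fun k => digit N z (k+1)) := by
  induction n with
  | zero => simp [Psi, Int.floor_eq_zero_iff, hz.1, hz.2]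
  | succ n ih =>
    rw [Psi_succ, ← ih, digit_succ_eq hN]
    ring


lemma invN_lt_one (hN : 2 ≤ N) : ((N:ℝ))⁻¹ < 1 := by
  rw [inv_lt_one_iff₀]; right; exact_mod_cast by omega

lemma summable_aux (hN : 2 ≤ N) {b : ℕ → ℤ} (hb : ∀ k, 0 ≤ b k ∧ b k < N) :
    Summable (fun k : ℕ => (b k : ℝ) / (N:ℝ)^(k+1)) := by
  have hNR : (2:ℝ) ≤ N := by exact_mod_cast hN
  have h0 : ∀ k, (0:ℝ) ≤ (b k : ℝ) / (N:ℝ)^(k+1) := by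
    intro k
    have := (hb k).1
    positivity
  refine Summable.of_nonneg_of_le h0 (fun k => ?_)
    (summable_geometric_of_lt_one (by positivity) (invN_lt_one hN))
  have hp1 : (0:ℝ) < (N:ℝ)^(k+1) := by positivity
  rw [inv_pow, div_le_iff₀ hp1]
  have h2 : ((N:ℝ)^k)⁻¹ * (N:ℝ)^(k+1) = N := by
    rw [pow_succ]; field_simp
  rw [h2]
  exact_mod_cast (hb k).2.le

lemma tsum_invpow (hN : 2 ≤ N) : ∑' i : ℕ, ((N:ℝ)^(i+1))⁻¹ = ((N:ℝ) - 1)⁻¹ := by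
  have hNR : (2:ℝ) ≤ N := by exact_mod_cast hN
  have h : ∀ i : ℕ, ((N:ℝ)^(i+1))⁻¹ = (N:ℝ)⁻¹ * ((N:ℝ)⁻¹)^i := by
    intro i; rw [← inv_pow, pow_succ']
  simp_rw [h]
  rw [tsum_mul_left, tsum_geometric_of_lt_one (by positivity) (invN_lt_one hN)]
  have h1 : (1:ℝ) - (N:ℝ)⁻¹ ≠ 0 := by
    have := invN_lt_one hN
    linarith
  field_simp

lemma hasSum_digits (hN : 2 ≤ N) {z : ℝ} (hz : z ∈ Set.Ico (0:ℝ) 1) :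
    HasSum (fun k : ℕ => (digit N z (k+1) : ℝ) / (N:ℝ)^(k+1)) z := by
  have hN0 : 0 < N := by omega
  have hNR : (2:ℝ) ≤ N := by exact_mod_cast hN
  have hs : Summable (fun k : ℕ => (digit N z (k+1) : ℝ) / (N:ℝ)^(k+1)) :=
    summable_aux hN (fun k => ⟨digit_nonneg hN0 z _, digit_lt hN0 z _⟩)
  have hpart : ∀ n, ∑ k ∈ Finset.range n, (digit N z (k+1):ℝ)/(N:ℝ)^(k+1)
      = (⌊z * (N:ℝ)^n⌋ : ℝ) / (N:ℝ)^n := by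
    intro n
    rw [floor_eq_Psi hN0 hz n]
    unfold Psi
    push_cast
    rw [Finset.sum_div]
    apply Finset.sum_congr rfl
    intro k hk
    have hk' := Finset.mem_range.mp hk
    rw [div_eq_div_iff (by positivity) (by positivity), mul_assoc, ← pow_add,
      show n - 1 - k + (k+1) = n by omega]
  have htend : Filter.Tendsto (fun n => (⌊z * (N:ℝ)^n⌋ : ℝ)/(N:ℝ)^n)
      Filter.atTop (nhds z) := by
    apply tendsto_of_tendsto_of_tendsto_of_le_of_le
      (g := fun n : ℕ => z - ((N:ℝ)⁻¹)^n) (h := fun _ : ℕ => z)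
    · have h0 : Filter.Tendsto (fun n : ℕ => ((N:ℝ)⁻¹)^n) Filter.atTop (nhds 0) :=
        tendsto_pow_atTop_nhds_zero_of_lt_one (by positivity) (invN_lt_one hN)
      simpa using (tendsto_const_nhds (x := z)).sub h0
    · exact tendsto_const_nhds
    · intro n
      have hp : (0:ℝ) < (N:ℝ)^n := by positivity
      rw [le_div_iff₀ hp, sub_mul]
      have h1 : ((N:ℝ)⁻¹)^n * (N:ℝ)^n = 1 := by
        rw [← mul_pow]; simp [show (N:ℝ) ≠ 0 by positivity]
      rw [h1]
      exact (Int.sub_one_lt_floor _).le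
    · intro n
      have hp : (0:ℝ) < (N:ℝ)^n := by positivity
      rw [div_le_iff₀ hp]
      exact Int.floor_le _
  have htend2 : Filter.Tendsto
      (fun n => ∑ k ∈ Finset.range n, (digit N z (k+1):ℝ)/(N:ℝ)^(k+1))
      Filter.atTop (nhds z) := by
    simpa only [hpart] using htend
  have : z = ∑' k, (digit N z (k+1):ℝ)/(N:ℝ)^(k+1) :=
    tendsto_nhds_unique htend2 hs.hasSum.tendsto_sum_nat
  exact hs.hasSum_iff.mpr this.symm

lemma summable_invpow (hN : 2 ≤ N) : Summable (fun i : ℕ => ((N:ℝ)^(i+1))⁻¹) := by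
  have h : ∀ i : ℕ, ((N:ℝ)^(i+1))⁻¹ = ((N:ℝ)⁻¹)^i * (N:ℝ)⁻¹ := by
    intro i; rw [← inv_pow, pow_succ]
  simp_rw [h]
  exact (summable_geometric_of_lt_one (by positivity) (invN_lt_one hN)).mul_right _

lemma expansion (hN : 2 ≤ N) {b : ℕ → ℤ} (hb : ∀ k, 0 ≤ b k ∧ b k < N)
    (hinf : ∀ n, ∃ k, n ≤ k ∧ b k ≠ (N:ℤ) - 1) :
    (∑' k : ℕ, (b k : ℝ)/(N:ℝ)^(k+1)) ∈ Set.Ico (0:ℝ) 1 ∧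
    ∀ k, digit N (∑' k : ℕ, (b k : ℝ)/(N:ℝ)^(k+1)) (k+1) = b k := by
  have hN0 : 0 < N := by omega
  have hNR : (2:ℝ) ≤ N := by exact_mod_cast hN
  set w := ∑' k : ℕ, (b k : ℝ)/(N:ℝ)^(k+1) with hw
  have hs : Summable (fun k : ℕ => (b k : ℝ)/(N:ℝ)^(k+1)) := summable_aux hN hb
  have htail : ∀ n : ℕ, (0 ≤ ∑' i : ℕ, (b (i+n) : ℝ)/(N:ℝ)^(i+1)) ∧
      (∑' i : ℕ, (b (i+n) : ℝ)/(N:ℝ)^(i+1)) < 1 := by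
    intro n
    have hsn : Summable (fun i : ℕ => (b (i+n) : ℝ)/(N:ℝ)^(i+1)) :=
      summable_aux hN (fun i => hb (i+n))
    constructor
    · exact tsum_nonneg (fun i => by have := (hb (i+n)).1; positivity)
    · obtain ⟨k₀, hk₀n, hk₀⟩ := hinf n
      have hN2 : (2:ℤ) ≤ N := by exact_mod_cast hN
      set c : ℕ → ℤ := fun i => if i = k₀ - n then (N:ℤ) - 2 else (N:ℤ) - 1 with hc
      have hcb : ∀ i, 0 ≤ c i ∧ c i < N := by
        intro i
        simp only [hc]
        split <;> omega
      have hsc : Summable (fun i : ℕ => (c i : ℝ)/(N:ℝ)^(i+1)) := summable_aux hN hcb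
      have hble : ∀ i, (b (i+n) : ℝ)/(N:ℝ)^(i+1) ≤ (c i : ℝ)/(N:ℝ)^(i+1) := by
        intro i
        have hnum : b (i+n) ≤ c i := by
          simp only [hc]
          split
          · rename_i h
            rw [show i + n = k₀ by omega]
            have := (hb k₀).2
            omega
          · have := (hb (i+n)).2
            omega
        have hnumR : (b (i+n):ℝ) ≤ (c i : ℝ) := by exact_mod_cast hnum
        gcongr
      have hcsplit : ∀ i, (c i : ℝ)/(N:ℝ)^(i+1)
          = ((N:ℝ)-1) * ((N:ℝ)^(i+1))⁻¹
            - (if i = k₀ - n then ((N:ℝ)^(k₀-n+1))⁻¹ else 0) := by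
        intro i
        simp only [hc]
        split
        · rename_i h
          subst h
          push_cast
          have hp : ((N:ℝ)^(k₀-n+1)) ≠ 0 := by positivity
          field_simp
          ring
        · push_cast
          rw [sub_zero, div_eq_mul_inv]
      have hsum1 : Summable (fun i : ℕ => ((N:ℝ)-1) * ((N:ℝ)^(i+1))⁻¹) :=
        (summable_invpow hN).mul_left _
      have hsum2 : Summable (fun i : ℕ => if i = k₀ - n then ((N:ℝ)^(k₀-n+1))⁻¹ else 0) :=
        (hasSum_ite_eq (k₀ - n) _).summable
      calc ∑' i : ℕ, (b (i+n) : ℝ)/(N:ℝ)^(i+1) ≤ ∑' i : ℕ, (c i : ℝ)/(N:ℝ)^(i+1) :=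
            Summable.tsum_le_tsum hble hsn hsc
        _ = 1 - ((N:ℝ)^(k₀-n+1))⁻¹ := by
            rw [tsum_congr hcsplit, Summable.tsum_sub hsum1 hsum2, tsum_mul_left,
              tsum_invpow hN, tsum_ite_eq]
            have hne : (N:ℝ) - 1 ≠ 0 := by linarith
            field_simp
        _ < 1 := by
            have : (0:ℝ) < ((N:ℝ)^(k₀-n+1))⁻¹ := by positivity
            linarith
  have hfloor : ∀ n, ⌊w * (N:ℝ)^n⌋ = Psi N n b := by
    intro n
    have hsplit := Summable.sum_add_tsum_nat_add (f := fun k : ℕ => (b k : ℝ)/(N:ℝ)^(k+1)) n hs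
    have hR := htail n
    set R := ∑' i : ℕ, (b (i+n) : ℝ)/(N:ℝ)^(i+1) with hRdef
    have h1 : (∑' i : ℕ, (b (i+n):ℝ)/(N:ℝ)^(i+n+1)) * (N:ℝ)^n = R := by
      rw [← tsum_mul_right]
      apply tsum_congr
      intro i
      rw [div_mul_eq_mul_div, div_eq_div_iff (by positivity) (by positivity),
        mul_assoc, ← pow_add, show n + (i + 1) = i + n + 1 by omega]
    have h2 : (∑ k ∈ Finset.range n, (b k:ℝ)/(N:ℝ)^(k+1)) * (N:ℝ)^n = ((Psi N n b : ℤ) : ℝ) := by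
      unfold Psi
      push_cast
      rw [Finset.sum_mul]
      apply Finset.sum_congr rfl
      intro k hk
      have hk' := Finset.mem_range.mp hk
      rw [div_mul_eq_mul_div, div_eq_iff (by positivity), mul_assoc, ← pow_add,
        show n - 1 - k + (k+1) = n by omega]
    have hw' : w * (N:ℝ)^n = ((Psi N n b : ℤ) : ℝ) + R := by
      calc w * (N:ℝ)^n
          = (∑ k ∈ Finset.range n, (b k:ℝ)/(N:ℝ)^(k+1)
              + ∑' i : ℕ, (b (i+n):ℝ)/(N:ℝ)^(i+n+1)) * (N:ℝ)^n := by rw [hsplit]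
        _ = ((Psi N n b : ℤ) : ℝ) + R := by rw [add_mul, h1, h2]
    rw [Int.floor_eq_iff, hw']
    constructor
    · linarith [hR.1]
    · push_cast
      linarith [hR.2]
  have hw01 : w ∈ Set.Ico (0:ℝ) 1 := by
    have h0 := hfloor 0
    simp only [pow_zero, mul_one, Psi, Finset.range_zero, Finset.sum_empty] at h0
    exact Int.floor_eq_zero_iff.mp h0
  refine ⟨hw01, fun k => ?_⟩
  show ⌊w * (N:ℝ)^(k+1)⌋ % N = b k
  rw [hfloor (k+1), Psi_succ, add_comm, Int.add_mul_emod_self_left,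
    Int.emod_eq_of_lt (hb k).1 (hb k).2]

lemma cycle_inv (hN : 0 < N) {x : ℤ} (hx0 : 0 ≤ x) (hx : x < N) :
    ((x + 1) % N - 1) % N = x := by
  have hNZ : (0:ℤ) < N := by exact_mod_cast hN
  have hm1 : ((0:ℤ) - 1) % N = N - 1 := by
    rw [show (0:ℤ) - 1 = (N - 1) + N * (-1) by ring, Int.add_mul_emod_self_left,
      Int.emod_eq_of_lt (by omega) (by omega)]
  rcases eq_or_lt_of_le (by omega : x + 1 ≤ (N:ℤ)) with heq | hlt
  · rw [heq, Int.emod_self, hm1]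
    omega
  · have h2 : (x + 1) % N = x + 1 := Int.emod_eq_of_lt (by omega) hlt
    rw [h2, add_sub_cancel_right, Int.emod_eq_of_lt hx0 hx]

lemma cycle_inv' (hN : 0 < N) {d : ℤ} (h0 : 0 ≤ d) (hd : d < N) :
    ((d - 1) % N + 1) % N = d := by
  have hNZ : (0:ℤ) < N := by exact_mod_cast hN
  have hm1 : ((0:ℤ) - 1) % N = N - 1 := by
    rw [show (0:ℤ) - 1 = (N - 1) + N * (-1) by ring, Int.add_mul_emod_self_left,
      Int.emod_eq_of_lt (by omega) (by omega)]
  rcases eq_or_lt_of_le h0 with heq | hlt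
  · rw [← heq, hm1, sub_add_cancel, Int.emod_self]
  · have h2 : (d - 1) % N = d - 1 := Int.emod_eq_of_lt (by omega) (by omega)
    rw [h2, sub_add_cancel, Int.emod_eq_of_lt h0 hd]

/-- The good set: points of `[0,1)` whose digit sequence is not eventually constant. -/
def Good (N : ℕ) : Set ℝ :=
  {z | z ∈ Set.Ico (0:ℝ) 1 ∧ ∀ c : ℤ, ∀ n : ℕ, ∃ k, n ≤ k ∧ digit N z (k+1) ≠ c}

lemma Tmap_good (hN : 2 ≤ N) {z : ℝ} (hz : z ∈ Good N) :
    Tmap N z ∈ Good N ∧ ∀ k, digit N (Tmap N z) (k+1) = (digit N z (k+1) + 1) % N := by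
  have hN0 : 0 < N := by omega
  have hNZ : (0:ℤ) < N := by exact_mod_cast hN0
  obtain ⟨hz01, hzG⟩ := hz
  set b : ℕ → ℤ := fun k => (digit N z (k+1) + 1) % N with hb
  have hbb : ∀ k, 0 ≤ b k ∧ b k < N := fun k =>
    ⟨Int.emod_nonneg _ hNZ.ne', Int.emod_lt_of_pos _ hNZ⟩
  have hbinv : ∀ k, (b k - 1) % N = digit N z (k+1) := fun k =>
    cycle_inv hN0 (digit_nonneg hN0 z _) (digit_lt hN0 z _)
  have hinf : ∀ n, ∃ k, n ≤ k ∧ b k ≠ (N:ℤ) - 1 := by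
    intro n
    obtain ⟨k, hk, hkne⟩ := hzG ((N:ℤ) - 2) n
    refine ⟨k, hk, fun hc => hkne ?_⟩
    rw [← hbinv k, hc, show (N:ℤ) - 1 - 1 = N - 2 by ring,
      Int.emod_eq_of_lt (by omega) (by omega)]
  have hT : Tmap N z = ∑' k : ℕ, (b k : ℝ)/(N:ℝ)^(k+1) := rfl
  obtain ⟨h01, hdig⟩ := expansion hN hbb hinf
  rw [← hT] at h01 hdig
  refine ⟨⟨h01, ?_⟩, hdig⟩
  intro c n
  obtain ⟨k, hk, hkne⟩ := hzG ((c - 1) % N) n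
  refine ⟨k, hk, fun hc => hkne ?_⟩
  have h1 : b k = c := by rw [← hdig k]; exact hc
  have h2 := hbinv k
  rw [h1] at h2
  exact h2.symm

lemma iterate_good (hN : 2 ≤ N) {z : ℝ} (hz : z ∈ Good N) (j : ℕ) :
    (Tmap N)^[j] z ∈ Good N ∧
    ∀ k, digit N ((Tmap N)^[j] z) (k+1) = (digit N z (k+1) + j) % N := by
  have hN0 : 0 < N := by omega
  induction j with
  | zero =>
    refine ⟨by simpa using hz, fun k => ?_⟩
    simp only [Function.iterate_zero, id_eq, Nat.cast_zero, add_zero]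
    exact (Int.emod_eq_of_lt (digit_nonneg hN0 z _) (digit_lt hN0 z _)).symm
  | succ j ih =>
    obtain ⟨hG, hd⟩ := ih
    obtain ⟨hG', hd'⟩ := Tmap_good hN hG
    rw [Function.iterate_succ_apply']
    refine ⟨hG', fun k => ?_⟩
    rw [hd' k, hd k, Int.emod_add_emod]
    push_cast
    ring_nf

lemma sum_emod (hN : 0 < N) {a : ℤ} (ha : 0 ≤ a) (ha' : a < N) :
    ∑ j ∈ Finset.range N, (a + (j:ℤ)) % N = ∑ j ∈ Finset.range N, (j : ℤ) := by
  have hNZ : (0:ℤ) < N := by exact_mod_cast hN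
  refine Finset.sum_nbij' (i := fun j => ((a + (j:ℤ)) % N).toNat)
    (j := fun j => (((j:ℤ) - a) % N).toNat) ?_ ?_ ?_ ?_ ?_
  · intro j hj
    have h1 : 0 ≤ (a + (j:ℤ)) % N := Int.emod_nonneg _ hNZ.ne'
    have h2 : (a + (j:ℤ)) % N < N := Int.emod_lt_of_pos _ hNZ
    simp only [Finset.mem_range] at *
    omega
  · intro j hj
    have h1 : 0 ≤ ((j:ℤ) - a) % N := Int.emod_nonneg _ hNZ.ne'
    have h2 : ((j:ℤ) - a) % N < N := Int.emod_lt_of_pos _ hNZ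
    simp only [Finset.mem_range] at *
    omega
  · intro j hj
    have h1 : 0 ≤ (a + (j:ℤ)) % N := Int.emod_nonneg _ hNZ.ne'
    have hcast : ((((a + (j:ℤ)) % N).toNat : ℤ)) = (a + (j:ℤ)) % N := Int.toNat_of_nonneg h1
    have key : ((a + (j:ℤ)) % N - a) % N = (j:ℤ) % N := by
      conv_rhs => rw [show (j:ℤ) = a + (j:ℤ) - a by ring]
      rw [Int.sub_emod, Int.sub_emod (a + (j:ℤ)) a, Int.emod_emod_of_dvd _ dvd_rfl]
    have hjN : ((j:ℤ)) % N = j := Int.emod_eq_of_lt (by positivity) (by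
      exact_mod_cast Finset.mem_range.mp hj)
    rw [hcast, key, hjN, Int.toNat_natCast]
  · intro j hj
    have h1 : 0 ≤ ((j:ℤ) - a) % N := Int.emod_nonneg _ hNZ.ne'
    have hcast : (((((j:ℤ) - a) % N).toNat : ℤ)) = ((j:ℤ) - a) % N := Int.toNat_of_nonneg h1
    have key : (a + ((j:ℤ) - a) % N) % N = (j:ℤ) % N := by
      rw [add_comm a, Int.emod_add_emod, sub_add_cancel]
    have hjN : ((j:ℤ)) % N = j := Int.emod_eq_of_lt (by positivity) (by
      exact_mod_cast Finset.mem_range.mp hj)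
    rw [hcast, key, hjN, Int.toNat_natCast]
  · intro j hj
    have h1 : 0 ≤ (a + (j:ℤ)) % N := Int.emod_nonneg _ hNZ.ne'
    exact (Int.toNat_of_nonneg h1).symm

lemma orbit_sum (hN : 2 ≤ N) {z : ℝ} (hz : z ∈ Good N) :
    ∑ j ∈ Finset.range N, (Tmap N)^[j] z = N / 2 := by
  have hN0 : 0 < N := by omega
  have hNZ : (0:ℤ) < N := by exact_mod_cast hN0
  have hNR : (2:ℝ) ≤ N := by exact_mod_cast hN
  have key : ∀ j : ℕ, (Tmap N)^[j] z
      = ∑' k : ℕ, (((digit N z (k+1) + j) % N : ℤ) : ℝ) / (N:ℝ)^(k+1) := by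
    intro j
    obtain ⟨hG, hd⟩ := iterate_good hN hz j
    rw [← (hasSum_digits hN hG.1).tsum_eq]
    exact tsum_congr fun k => by rw [hd k]
  have hsum : ∀ j : ℕ, Summable
      (fun k : ℕ => (((digit N z (k+1) + j) % N : ℤ) : ℝ) / (N:ℝ)^(k+1)) :=
    fun j => summable_aux hN (fun k => ⟨Int.emod_nonneg _ hNZ.ne', Int.emod_lt_of_pos _ hNZ⟩)
  have hgauss : (∑ j ∈ Finset.range N, (j:ℝ)) * 2 = (N:ℝ) * ((N:ℝ) - 1) := by
    have h2 : (∑ i ∈ Finset.range N, i) * 2 = N * (N - 1) := Finset.sum_range_id_mul_two N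
    have h3 : ((∑ i ∈ Finset.range N, i : ℕ) : ℝ) * 2 = ((N * (N-1) : ℕ) : ℝ) := by
      exact_mod_cast h2
    push_cast [Nat.cast_sub (by omega : 1 ≤ N)] at h3
    exact_mod_cast h3
  calc ∑ j ∈ Finset.range N, (Tmap N)^[j] z
      = ∑ j ∈ Finset.range N, ∑' k : ℕ,
          (((digit N z (k+1) + j) % N : ℤ) : ℝ) / (N:ℝ)^(k+1) :=
        Finset.sum_congr rfl fun j _ => key j
    _ = ∑' k : ℕ, ∑ j ∈ Finset.range N,
          (((digit N z (k+1) + j) % N : ℤ) : ℝ) / (N:ℝ)^(k+1) :=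
        (Summable.tsum_finsetSum (fun j _ => hsum j)).symm
    _ = ∑' k : ℕ, ((N:ℝ) * ((N:ℝ) - 1) / 2) * ((N:ℝ)^(k+1))⁻¹ := by
        apply tsum_congr
        intro k
        rw [← Finset.sum_div, div_eq_mul_inv]
        congr 1
        have hg := sum_emod hN0 (digit_nonneg hN0 z (k+1)) (digit_lt hN0 z (k+1))
        have hcast : ∑ j ∈ Finset.range N, (((digit N z (k+1) + j) % N : ℤ) : ℝ)
            = ((∑ j ∈ Finset.range N, ((digit N z (k+1) + (j:ℤ)) % N) : ℤ) : ℝ) := by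
          push_cast
          rfl
        rw [hcast, hg]
        push_cast
        linarith [hgauss]
    _ = (N:ℝ) / 2 := by
        rw [tsum_mul_left, tsum_invpow hN]
        have hne : (N:ℝ) - 1 ≠ 0 := by linarith
        field_simp

lemma good_compl_null (hN : 2 ≤ N) : volume (Set.Ico (0:ℝ) 1 \ Good N) = 0 := by
  have hN0 : 0 < N := by omega
  have hsub : Set.Ico (0:ℝ) 1 \ Good N ⊆
      ⋃ c : ℤ, ⋃ n : ℕ,
        {z | z ∈ Set.Ico (0:ℝ) 1 ∧ ∀ k, n ≤ k → digit N z (k+1) = c} := by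
    intro z hz
    obtain ⟨hz01, hzbad⟩ := hz
    have h1 : ¬ ∀ c : ℤ, ∀ n : ℕ, ∃ k, n ≤ k ∧ digit N z (k+1) ≠ c := fun h => hzbad ⟨hz01, h⟩
    push_neg at h1
    obtain ⟨c, n, hcn⟩ := h1
    exact Set.mem_iUnion.mpr ⟨c, Set.mem_iUnion.mpr ⟨n, hz01, hcn⟩⟩
  apply measure_mono_null hsub
  apply measure_iUnion_null
  intro c
  apply measure_iUnion_null
  intro n
  apply Set.Countable.measure_zero _ volume
  set E := {z | z ∈ Set.Ico (0:ℝ) 1 ∧ ∀ k, n ≤ k → digit N z (k+1) = c} with hE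
  rw [← Set.countable_coe_iff]
  have hinj : Function.Injective (fun z : E => (fun i : Fin n => digit N z.1 (i+1))) := by
    rintro ⟨z, hz01, hz⟩ ⟨w, hw01, hw⟩ h
    have hdig : ∀ k : ℕ, digit N z (k+1) = digit N w (k+1) := by
      intro k
      rcases lt_or_ge k n with hk | hk
      · exact congrFun h ⟨k, hk⟩
      · rw [hz k hk, hw k hk]
    have hzw : z = w := by
      rw [← (hasSum_digits hN hz01).tsum_eq, ← (hasSum_digits hN hw01).tsum_eq]
      exact tsum_congr fun k => by rw [hdig k]
    exact Subtype.ext hzw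
  exact Function.Injective.countable hinj

lemma ae_good (hN : 2 ≤ N) :
    ∀ᵐ z ∂(volume.restrict (Set.Ico (0:ℝ) 1)), z ∈ Good N := by
  rw [ae_iff, Measure.restrict_apply' measurableSet_Ico]
  apply measure_mono_null _ (good_compl_null hN)
  intro z hz
  exact ⟨hz.2, hz.1⟩

lemma measurable_Tmap (hN : 2 ≤ N) : Measurable (Tmap N) := by
  have hN0 : 0 < N := by omega
  have hNZ : (0:ℤ) < N := by exact_mod_cast hN0
  have hmeas : ∀ n : ℕ, Measurable (fun z => ∑ k ∈ Finset.range n,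
      (((digit N z (k+1) + 1) % N : ℤ) : ℝ) / (N:ℝ)^(k+1)) := by
    intro n
    apply Finset.measurable_sum
    intro k _
    apply Measurable.div_const
    have h1 : Measurable fun z : ℝ => ⌊z * (N:ℝ)^(k+1)⌋ :=
      Int.measurable_floor.comp (measurable_id.mul_const _)
    have h2 : Measurable fun m : ℤ => (((m % N + 1) % N : ℤ) : ℝ) := measurable_from_top
    exact h2.comp h1
  have hlim : Filter.Tendsto (fun n z => ∑ k ∈ Finset.range n,
      (((digit N z (k+1) + 1) % N : ℤ) : ℝ) / (N:ℝ)^(k+1)) Filter.atTop (nhds (Tmap N)) := by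
    rw [tendsto_pi_nhds]
    intro z
    exact (summable_aux hN (fun k : ℕ =>
      ⟨Int.emod_nonneg _ hNZ.ne', Int.emod_lt_of_pos _ hNZ⟩)).hasSum.tendsto_sum_nat
  exact measurable_of_tendsto_metrizable hmeas hlim

/-- base-N cylinder intervals -/
def cyls (N : ℕ) : Set (Set ℝ) :=
  {s | ∃ (n : ℕ) (m : ℤ), s = Set.Ico ((m:ℝ)/(N:ℝ)^n) (((m:ℝ)+1)/(N:ℝ)^n)}

lemma mem_cyl_iff (hN : 0 < N) {n : ℕ} {m : ℤ} {z : ℝ} :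
    z ∈ Set.Ico ((m:ℝ)/(N:ℝ)^n) (((m:ℝ)+1)/(N:ℝ)^n) ↔ ⌊z * (N:ℝ)^n⌋ = m := by
  have hp : (0:ℝ) < (N:ℝ)^n := by
    have : (0:ℝ) < N := by exact_mod_cast hN
    positivity
  rw [Set.mem_Ico, div_le_iff₀ hp, lt_div_iff₀ hp, Int.floor_eq_iff]

lemma floor_scale (hN : 0 < N) {n n' : ℕ} (hle : n ≤ n') {m' : ℤ} {w : ℝ}
    (hw : ⌊w * (N:ℝ)^n'⌋ = m') : ⌊w * (N:ℝ)^n⌋ = m' / (N:ℤ)^(n'-n) := by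
  have hNR : (0:ℝ) < N := by exact_mod_cast hN
  have hq : (0:ℤ) < (N:ℤ)^(n'-n) := by positivity
  set q := (N:ℤ)^(n'-n) with hqdef
  set e := m' / q with he
  have hdm := Int.mul_ediv_add_emod m' q  -- q * (m'/q) + m'%q = m'
  have hr1 : 0 ≤ m' % q := Int.emod_nonneg _ hq.ne'
  have hr2 : m' % q < q := Int.emod_lt_of_pos _ hq
  have hwle : (m':ℝ) ≤ w * (N:ℝ)^n' ∧ w * (N:ℝ)^n' < (m':ℝ) + 1 := by
    rw [Int.floor_eq_iff] at hw
    exact ⟨hw.1, hw.2⟩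
  have hqR : ((q:ℤ):ℝ) = (N:ℝ)^(n'-n) := by rw [hqdef]; push_cast; ring
  have hsplit : w * (N:ℝ)^n' = (w * (N:ℝ)^n) * ((q:ℤ):ℝ) := by
    rw [hqR, mul_assoc, ← pow_add, show n + (n'-n) = n' by omega]
  rw [Int.floor_eq_iff]
  have hqRpos : (0:ℝ) < ((q:ℤ):ℝ) := by exact_mod_cast hq
  have hqe1 : q * e ≤ m' := by linarith [hr1, hdm]
  have hqe2 : m' + 1 ≤ q * (e + 1) := by
    have hd : q * (e+1) = q * e + q := by ring
    linarith [hdm, hr2]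
  have hqne : ((q:ℤ):ℝ) ≠ 0 := hqRpos.ne'
  constructor
  · -- e ≤ w N^n
    rw [show ((e:ℤ):ℝ) = (((q * e : ℤ)):ℝ) / ((q:ℤ):ℝ) by push_cast; field_simp,
      div_le_iff₀ hqRpos]
    have h1 : ((q * e : ℤ):ℝ) ≤ (m':ℝ) := by exact_mod_cast hqe1
    calc ((q * e : ℤ):ℝ) ≤ (m':ℝ) := h1
      _ ≤ w * (N:ℝ)^n' := hwle.1
      _ = (w * (N:ℝ)^n) * ((q:ℤ):ℝ) := hsplit
  · -- w N^n < e+1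
    rw [show ((e:ℤ):ℝ) + 1 = (((q * (e+1) : ℤ)):ℝ) / ((q:ℤ):ℝ) by push_cast; field_simp,
      lt_div_iff₀ hqRpos]
    have h1 : (m':ℝ) + 1 ≤ ((q * (e+1) : ℤ):ℝ) := by exact_mod_cast hqe2
    calc (w * (N:ℝ)^n) * ((q:ℤ):ℝ) = w * (N:ℝ)^n' := hsplit.symm
      _ < (m':ℝ) + 1 := hwle.2
      _ ≤ ((q * (e+1) : ℤ):ℝ) := h1

lemma isPiSystem_cyls (hN : 2 ≤ N) : IsPiSystem (cyls N) := by
  have hN0 : 0 < N := by omega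
  have key : ∀ (n n' : ℕ) (m m' : ℤ), n ≤ n' →
      (Set.Ico ((m:ℝ)/(N:ℝ)^n) (((m:ℝ)+1)/(N:ℝ)^n) ∩
        Set.Ico ((m':ℝ)/(N:ℝ)^n') (((m':ℝ)+1)/(N:ℝ)^n')).Nonempty →
      Set.Ico ((m:ℝ)/(N:ℝ)^n) (((m:ℝ)+1)/(N:ℝ)^n) ∩
        Set.Ico ((m':ℝ)/(N:ℝ)^n') (((m':ℝ)+1)/(N:ℝ)^n')
        = Set.Ico ((m':ℝ)/(N:ℝ)^n') (((m':ℝ)+1)/(N:ℝ)^n') := by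
    intro n n' m m' hle ⟨x, hx1, hx2⟩
    apply Set.inter_eq_self_of_subset_right
    intro y hy
    rw [mem_cyl_iff hN0] at hx1 hx2 hy ⊢
    rw [floor_scale hN0 hle hy, ← floor_scale hN0 hle hx2, hx1]
  rintro s ⟨n, m, rfl⟩ t ⟨n', m', rfl⟩ hne
  rcases le_total n n' with hle | hle
  · rw [key n n' m m' hle hne]
    exact ⟨n', m', rfl⟩
  · rw [Set.inter_comm] at hne ⊢
    rw [key n' n m' m hle hne]
    exact ⟨n, m, rfl⟩

lemma borel_eq_cyls (hN : 2 ≤ N) :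
    (inferInstance : MeasurableSpace ℝ) = .generateFrom (cyls N) := by
  have hN0 : 0 < N := by omega
  have hNR : (2:ℝ) ≤ N := by exact_mod_cast hN
  apply le_antisymm
  · rw [BorelSpace.measurable_eq (α := ℝ), borel_eq_generateFrom_Iio]
    apply MeasurableSpace.generateFrom_le
    rintro s ⟨a, rfl⟩
    have hU : Set.Iio a = ⋃ p : ℕ × ℤ, ⋃ (_ : ((p.2:ℝ)+1)/(N:ℝ)^p.1 ≤ a),
        Set.Ico ((p.2:ℝ)/(N:ℝ)^p.1) (((p.2:ℝ)+1)/(N:ℝ)^p.1) := by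
      ext x
      simp only [Set.mem_Iio, Set.mem_iUnion]
      constructor
      · intro hx
        obtain ⟨n, hn⟩ := exists_pow_lt_of_lt_one (by linarith : (0:ℝ) < a - x)
          (invN_lt_one hN)
        refine ⟨⟨n, ⌊x * (N:ℝ)^n⌋⟩, ?_, (mem_cyl_iff hN0).mpr rfl⟩
        have hp : (0:ℝ) < (N:ℝ)^n := by positivity
        rw [div_le_iff₀ hp]
        have h1 : (⌊x * (N:ℝ)^n⌋:ℝ) ≤ x * (N:ℝ)^n := Int.floor_le _
        have h2 : ((N:ℝ)⁻¹)^n * (N:ℝ)^n = 1 := by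
          rw [← mul_pow]
          simp [show (N:ℝ) ≠ 0 by positivity]
        nlinarith [hn, hp]
      · rintro ⟨p, hp, hx⟩
        exact lt_of_lt_of_le hx.2 hp
    rw [hU]
    apply MeasurableSet.iUnion
    intro p
    apply MeasurableSet.iUnion
    intro _
    exact .basic _ ⟨p.1, p.2, rfl⟩
  · apply MeasurableSpace.generateFrom_le
    rintro s ⟨n, m, rfl⟩
    exact measurableSet_Ico

lemma vol_cyl (hN : 0 < N) (n : ℕ) (m : ℤ) :
    volume (Set.Ico ((m:ℝ)/(N:ℝ)^n) (((m:ℝ)+1)/(N:ℝ)^n)) = ENNReal.ofReal (1/(N:ℝ)^n) := by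
  rw [Real.volume_Ico]
  congr 1
  rw [div_sub_div_same]
  ring_nf

lemma cyl_subset_unit (hN : 0 < N) {n : ℕ} {m : ℤ} (h0 : 0 ≤ m) (h1 : m + 1 ≤ (N:ℤ)^n) :
    Set.Ico ((m:ℝ)/(N:ℝ)^n) (((m:ℝ)+1)/(N:ℝ)^n) ⊆ Set.Ico (0:ℝ) 1 := by
  have hNR : (0:ℝ) < N := by exact_mod_cast hN
  have hp : (0:ℝ) < (N:ℝ)^n := by positivity
  intro z hz
  constructor
  · have : (0:ℝ) ≤ (m:ℝ)/(N:ℝ)^n := by positivity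
    linarith [hz.1]
  · have h2 : ((m:ℝ)+1)/(N:ℝ)^n ≤ 1 := by
      rw [div_le_one hp]
      have : ((m+1:ℤ):ℝ) ≤ (((N:ℤ)^n : ℤ):ℝ) := by exact_mod_cast h1
      push_cast at this
      linarith
    linarith [hz.2]

lemma cyl_inter_empty (hN : 0 < N) {n : ℕ} {m : ℤ} (hm : ¬(0 ≤ m ∧ m < (N:ℤ)^n)) :
    Set.Ico ((m:ℝ)/(N:ℝ)^n) (((m:ℝ)+1)/(N:ℝ)^n) ∩ Set.Ico (0:ℝ) 1 = ∅ := by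
  have hNR : (0:ℝ) < N := by exact_mod_cast hN
  have hp : (0:ℝ) < (N:ℝ)^n := by positivity
  rw [Set.eq_empty_iff_forall_notMem]
  rintro z ⟨hz1, hz2⟩
  rw [mem_cyl_iff hN] at hz1
  apply hm
  constructor
  · rw [← hz1]
    apply Int.floor_nonneg.mpr
    have := hz2.1
    positivity
  · rw [← hz1]
    rw [Int.floor_lt]
    have : z * (N:ℝ)^n < (N:ℝ)^n := by nlinarith [hz2.2]
    calc z * (N:ℝ)^n < (N:ℝ)^n := this
      _ = (((N:ℤ)^n : ℤ):ℝ) := by push_cast; ring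

lemma Tpreimage_cyl (hN : 2 ≤ N) {n : ℕ} {m : ℤ} (h0 : 0 ≤ m) (h1 : m < (N:ℤ)^n) :
    ∃ m' : ℤ, 0 ≤ m' ∧ m' < (N:ℤ)^n ∧
      ∀ z ∈ Good N, (Tmap N z ∈ Set.Ico ((m:ℝ)/(N:ℝ)^n) (((m:ℝ)+1)/(N:ℝ)^n) ↔
        z ∈ Set.Ico ((m':ℝ)/(N:ℝ)^n) (((m':ℝ)+1)/(N:ℝ)^n)) := by
  have hN0 : 0 < N := by omega
  have hNZ : (0:ℤ) < N := by exact_mod_cast hN0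
  obtain ⟨d, hd, hPsi⟩ := Psi_surj hN0 n m h0 h1
  set d' : ℕ → ℤ := fun k => (d k - 1) % N with hd'def
  have hd'b : ∀ k, 0 ≤ d' k ∧ d' k < N := fun k =>
    ⟨Int.emod_nonneg _ hNZ.ne', Int.emod_lt_of_pos _ hNZ⟩
  refine ⟨Psi N n d', Psi_nonneg n (fun k => (hd'b k).1), Psi_lt hN0 n hd'b, ?_⟩
  intro z hzG
  obtain ⟨hTG, hTd⟩ := Tmap_good hN hzG
  have hz01 := hzG.1
  have hab : ∀ k : ℕ, 0 ≤ digit N z (k+1) ∧ digit N z (k+1) < N := fun k =>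
    ⟨digit_nonneg hN0 z _, digit_lt hN0 z _⟩
  have hsb : ∀ k : ℕ, 0 ≤ (digit N z (k+1) + 1) % N ∧ (digit N z (k+1) + 1) % N < N := fun k =>
    ⟨Int.emod_nonneg _ hNZ.ne', Int.emod_lt_of_pos _ hNZ⟩
  rw [mem_cyl_iff hN0, mem_cyl_iff hN0, floor_eq_Psi hN0 hTG.1 n, floor_eq_Psi hN0 hz01 n]
  have hTz : Psi N n (fun k => digit N (Tmap N z) (k+1))
      = Psi N n (fun k => (digit N z (k+1) + 1) % N) :=
    Psi_congr n (fun k _ => hTd k)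
  rw [hTz]
  constructor
  · intro h
    have hinj := Psi_inj hN0 n hsb hd (h.trans hPsi.symm)
    apply Psi_congr n
    intro k hk
    have h2 := hinj k hk
    show digit N z (k+1) = (d k - 1) % N
    rw [← h2, cycle_inv hN0 (hab k).1 (hab k).2]
  · intro h
    have hinj := Psi_inj hN0 n hab hd'b h
    rw [← hPsi]
    apply Psi_congr n
    intro k hk
    show (digit N z (k+1) + 1) % N = d k
    rw [hinj k hk]
    exact cycle_inv' hN0 (hd k).1 (hd k).2

lemma map_eq (hN : 2 ≤ N) :
    (volume.restrict (Set.Ico (0:ℝ) 1)).map (Tmap N) = volume.restrict (Set.Ico (0:ℝ) 1) := by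
  have hN0 : 0 < N := by omega
  have hT := measurable_Tmap hN
  haveI hfin : IsFiniteMeasure (volume.restrict (Set.Ico (0:ℝ) 1)) := ⟨by
    rw [Measure.restrict_apply_univ, Real.volume_Ico]
    exact ENNReal.ofReal_lt_top⟩
  haveI : IsFiniteMeasure ((volume.restrict (Set.Ico (0:ℝ) 1)).map (Tmap N)) := by
    constructor
    rw [Measure.map_apply hT MeasurableSet.univ, Set.preimage_univ,
      Measure.restrict_apply_univ, Real.volume_Ico]
    exact ENNReal.ofReal_lt_top
  apply ext_of_generate_finite (cyls N) (borel_eq_cyls hN) (isPiSystem_cyls hN)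
  · rintro s ⟨n, m, rfl⟩
    rw [Measure.map_apply hT measurableSet_Ico,
      Measure.restrict_apply' measurableSet_Ico, Measure.restrict_apply' measurableSet_Ico]
    by_cases hm : 0 ≤ m ∧ m < (N:ℤ)^n
    · obtain ⟨m', hm'0, hm'1, hiff⟩ := Tpreimage_cyl hN hm.1 hm.2
      set C := Set.Ico ((m:ℝ)/(N:ℝ)^n) (((m:ℝ)+1)/(N:ℝ)^n) with hC
      set C' := Set.Ico ((m':ℝ)/(N:ℝ)^n) (((m':ℝ)+1)/(N:ℝ)^n) with hC'
      set Bad := Set.Ico (0:ℝ) 1 \ Good N with hBadDef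
      have hBad : volume Bad = 0 := good_compl_null hN
      have hsub1 : Tmap N ⁻¹' C ∩ Set.Ico (0:ℝ) 1 ⊆ C' ∪ Bad := by
        rintro z ⟨hz1, hz2⟩
        by_cases hzG : z ∈ Good N
        · exact Or.inl ((hiff z hzG).mp hz1)
        · exact Or.inr ⟨hz2, hzG⟩
      have hsub2 : C' ⊆ (Tmap N ⁻¹' C ∩ Set.Ico (0:ℝ) 1) ∪ Bad := by
        intro z hz
        have hz01 : z ∈ Set.Ico (0:ℝ) 1 :=
          cyl_subset_unit hN0 hm'0 (Int.add_one_le_iff.mpr hm'1) hz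
        by_cases hzG : z ∈ Good N
        · exact Or.inl ⟨(hiff z hzG).mpr hz, hz01⟩
        · exact Or.inr ⟨hz01, hzG⟩
      have hCC : C ∩ Set.Ico (0:ℝ) 1 = C :=
        Set.inter_eq_self_of_subset_left
          (cyl_subset_unit hN0 hm.1 (Int.add_one_le_iff.mpr hm.2))
      rw [hCC]
      apply le_antisymm
      · calc volume (Tmap N ⁻¹' C ∩ Set.Ico (0:ℝ) 1) ≤ volume (C' ∪ Bad) :=
              measure_mono hsub1
          _ ≤ volume C' + volume Bad := measure_union_le _ _
          _ = volume C' := by rw [hBad, add_zero]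
          _ = volume C := by rw [hC, hC', vol_cyl hN0, vol_cyl hN0]
      · calc volume C = volume C' := by rw [hC, hC', vol_cyl hN0, vol_cyl hN0]
          _ ≤ volume ((Tmap N ⁻¹' C ∩ Set.Ico (0:ℝ) 1) ∪ Bad) := measure_mono hsub2
          _ ≤ volume (Tmap N ⁻¹' C ∩ Set.Ico (0:ℝ) 1) + volume Bad := measure_union_le _ _
          _ = volume (Tmap N ⁻¹' C ∩ Set.Ico (0:ℝ) 1) := by rw [hBad, add_zero]
    · have hem : Set.Ico ((m:ℝ)/(N:ℝ)^n) (((m:ℝ)+1)/(N:ℝ)^n) ∩ Set.Ico (0:ℝ) 1 = ∅ :=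
        cyl_inter_empty hN0 hm
      rw [hem, measure_empty]
      have hsub : Tmap N ⁻¹' (Set.Ico ((m:ℝ)/(N:ℝ)^n) (((m:ℝ)+1)/(N:ℝ)^n))
          ∩ Set.Ico (0:ℝ) 1 ⊆ Set.Ico (0:ℝ) 1 \ Good N := by
        rintro z ⟨hz1, hz2⟩
        refine ⟨hz2, fun hzG => ?_⟩
        have hT01 := (Tmap_good hN hzG).1.1
        have : Tmap N z ∈ (∅ : Set ℝ) := by rw [← hem]; exact ⟨hz1, hT01⟩
        exact this
      exact measure_mono_null hsub (good_compl_null hN)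
  · rw [Measure.map_apply hT MeasurableSet.univ, Set.preimage_univ]

end DC

theorem digit_cycling_measure_preserving_and_sum
    (N : ℕ) (hN : 3 ≤ N) :
    (volume.restrict (Set.Ico (0 : ℝ) 1)).map (Tmap N) =
      volume.restrict (Set.Ico (0 : ℝ) 1) ∧
    ∀ᵐ z ∂(volume.restrict (Set.Ico (0 : ℝ) 1)),
      ∑ j ∈ Finset.range N, (Tmap N)^[j] z = N / 2 := by
  have hN2 : 2 ≤ N := by omega
  refine ⟨DC.map_eq hN2, ?_⟩
  filter_upwards [DC.ae_good hN2] with z hz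
  exact DC.orbit_sum hN2 hz

end
end
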